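/- arXiv:1607.08314 — 9 statements merged into one kernel-verified Lean document; each statement's English description precedes it below -/
import Mathlib

section
/- For every odd integer n ≥ 3 and every x ∈ [0,π], the sine polynomial φ(x) = (5/4)·sin(x) + Σ_{k=2}^{n−1} sin(kx) + ((2n−3)/(4n))·sin(nx) satisfies φ(x) ≥ 0. -/
open Real Finset


lemma mono_aux {f f' : ℝ → ℝ} (hd : ∀ t, HasDerivAt f (f' t) t)
    (hf' : ∀ t ∈ Set.Ioi (0:ℝ), 0 ≤ f' t) : MonotoneOn f (Set.Ici 0) := by
  apply monotoneOn_of_hasDerivWithinAt_nonneg (convex_Ici 0)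
    (fun t _ => (hd t).continuousAt.continuousWithinAt)
    (fun t ht => (hd t).hasDerivWithinAt)
  · intro t ht
    rw [interior_Ici] at ht
    exact hf' t ht

lemma sin_ge_t (x : ℝ) (hx : 0 ≤ x) : x - x^3/6 ≤ Real.sin x := by
  have key : MonotoneOn (fun t : ℝ => Real.sin t - (t - t^3/6)) (Set.Ici 0) := by
    apply mono_aux (f' := fun t => Real.cos t - (1 - t^2/2))
    · intro t
      have h2 : HasDerivAt (fun t : ℝ => t - t^3/6) (1 - t^2/2) t := by
        have h3 := (hasDerivAt_pow 3 t).div_const 6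
        have h4 := (hasDerivAt_id t).sub h3
        exact h4.congr_deriv (by push_cast; ring)
      exact (Real.hasDerivAt_sin t).sub h2
    · intro t _
      have := Real.one_sub_sq_div_two_le_cos (x := t)
      linarith
  have h0 := key Set.self_mem_Ici (Set.mem_Ici.2 hx) hx
  simp only [Real.sin_zero] at h0
  norm_num at h0
  linarith

lemma cos_le_t (x : ℝ) (hx : 0 ≤ x) : Real.cos x ≤ 1 - x^2/2 + x^4/24 := by
  have key : MonotoneOn (fun t : ℝ => (1 - t^2/2 + t^4/24) - Real.cos t) (Set.Ici 0) := by
    apply mono_aux (f' := fun t => (Real.sin t - (t - t^3/6)))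
    · intro t
      have h2 : HasDerivAt (fun t : ℝ => 1 - t^2/2 + t^4/24) (-(t - t^3/6)) t := by
        have h3 := ((hasDerivAt_pow 2 t).div_const 2)
        have h4 := ((hasDerivAt_pow 4 t).div_const 24)
        have h5 := ((hasDerivAt_const t (1:ℝ)).sub h3).add h4
        exact h5.congr_deriv (by push_cast; ring)
      have h6 := h2.sub (Real.hasDerivAt_cos t)
      exact h6.congr_deriv (by ring)
    · intro t ht
      have := sin_ge_t t (le_of_lt ht)
      linarith
  have h0 := key Set.self_mem_Ici (Set.mem_Ici.2 hx) hx
  simp only [Real.cos_zero] at h0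
  norm_num at h0
  linarith

lemma sin_le_t (x : ℝ) (hx : 0 ≤ x) : Real.sin x ≤ x - x^3/6 + x^5/120 := by
  have key : MonotoneOn (fun t : ℝ => (t - t^3/6 + t^5/120) - Real.sin t) (Set.Ici 0) := by
    apply mono_aux (f' := fun t => ((1 - t^2/2 + t^4/24) - Real.cos t))
    · intro t
      have h2 : HasDerivAt (fun t : ℝ => t - t^3/6 + t^5/120) (1 - t^2/2 + t^4/24) t := by
        have h3 := (hasDerivAt_pow 3 t).div_const 6
        have h4 := (hasDerivAt_pow 5 t).div_const 120
        have h5 := ((hasDerivAt_id t).sub h3).add h4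
        exact h5.congr_deriv (by push_cast; ring)
      exact h2.sub (Real.hasDerivAt_sin t)
    · intro t ht
      have := cos_le_t t (le_of_lt ht)
      linarith
  have h0 := key Set.self_mem_Ici (Set.mem_Ici.2 hx) hx
  simp only [Real.sin_zero] at h0
  norm_num at h0
  linarith

lemma cos_ge_t (x : ℝ) (hx : 0 ≤ x) : 1 - x^2/2 + x^4/24 - x^6/720 ≤ Real.cos x := by
  have key : MonotoneOn (fun t : ℝ => Real.cos t - (1 - t^2/2 + t^4/24 - t^6/720)) (Set.Ici 0) := by
    apply mono_aux (f' := fun t => ((t - t^3/6 + t^5/120) - Real.sin t))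
    · intro t
      have h2 : HasDerivAt (fun t : ℝ => 1 - t^2/2 + t^4/24 - t^6/720) (-(t - t^3/6 + t^5/120)) t := by
        have h3 := (hasDerivAt_pow 2 t).div_const 2
        have h4 := (hasDerivAt_pow 4 t).div_const 24
        have h6 := (hasDerivAt_pow 6 t).div_const 720
        have h5 := (((hasDerivAt_const t (1:ℝ)).sub h3).add h4).sub h6
        exact h5.congr_deriv (by push_cast; ring)
      have h7 := (Real.hasDerivAt_cos t).sub h2
      exact h7.congr_deriv (by ring)
    · intro t ht
      have := sin_le_t t (le_of_lt ht)
      linarith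
  have h0 := key Set.self_mem_Ici (Set.mem_Ici.2 hx) hx
  simp only [Real.cos_zero] at h0
  norm_num at h0
  linarith

lemma polyS (a b : ℝ) (ha0 : 0 ≤ a) (hb0 : 0 ≤ b) (hba : 9*b ≤ a) (ha : a ≤ 2.4675) :
    0 ≤ (8/15)*a^2 - (8/45)*a^3 + (-(4/3)*a + (8/45)*a^2 + (4/135)*a^3)*b
      + (1/12 + a/6 - a^2/30)*b^2 := by
  have hC : (0:ℝ) ≤ 1/12 + a/6 - a^2/30 := by nlinarith
  have hB : -(4/3)*a + (8/45)*a^2 + (4/135)*a^3 ≤ 0 := by nlinarith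
  have h117 : (0:ℝ) ≤ a^2 - 48*a + 117 := by nlinarith [mul_nonneg (sub_nonneg.2 ha) (by linarith : (0:ℝ) ≤ 45 - a)]
  have h3 : (0:ℝ) ≤ (8/15)*a^2 - (8/45)*a^3 + (-(4/3)*a + (8/45)*a^2 + (4/135)*a^3)*(a/9) := by
    nlinarith [mul_nonneg (mul_nonneg ha0 ha0) h117]
  nlinarith [mul_nonneg hC (sq_nonneg b), mul_nonneg (neg_nonneg.2 hB) (sub_nonneg.2 hba)]

lemma case1 (n : ℕ) (c σ D E : ℝ) (hn : 3 ≤ n) (hc : 0 ≤ c) (hσ : 0 ≤ σ)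
    (hDE : D^2 + E^2 = 1) (hbig : 9 ≤ 8*(n:ℝ)^2*c^2) :
    3*E*σ ≤ 2*(n:ℝ)*c*σ^2 + 2*(n:ℝ)*c*(1-D) := by
  have hn0 : (0:ℝ) < n := by exact_mod_cast (by omega : 0 < n)
  have hc0 : 0 < c := by
    rcases hc.eq_or_lt with h|h
    · exfalso; rw [← h] at hbig; norm_num at hbig
    · exact h
  have key4 : 4*(n:ℝ)*c*(3*E*σ) ≤ 4*(n:ℝ)*c*(2*(n:ℝ)*c*σ^2 + 2*(n:ℝ)*c*(1-D)) := by
    nlinarith [sq_nonneg (2*(n:ℝ)*c*E - 3*σ), mul_nonneg (sq_nonneg ((n:ℝ)*c)) (sq_nonneg (1-D)),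
      mul_nonneg (sub_nonneg.2 hbig) (sq_nonneg σ), hDE]
  exact le_of_mul_le_mul_left key4 (by positivity)

lemma key_poly (v h : ℝ) (hh : 0 ≤ h) (hv3 : 3*h ≤ v) (hv : v^2 ≤ 2.4675) :
    3*h*((2*v - (4/3)*v^3 + (4/15)*v^5)*(1 - h^2/2 + h^4/24))
      ≤ 2*v*((h - h^3/6)*(3 - h^2 - 2*v^2 + (2/3)*v^4 - (4/45)*v^6)) := by
  have hv0 : 0 ≤ v := le_trans (by linarith) hv3
  have hS := polyS (v^2) (h^2) (sq_nonneg v) (sq_nonneg h) (by nlinarith) hv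
  nlinarith [mul_nonneg (mul_nonneg hv0 hh) hS]

set_option maxHeartbeats 1000000 in
lemma case2 (n : ℕ) (hn : 3 ≤ n) (h : ℝ) (hh0 : 0 ≤ h) (hhp : h ≤ π/2)
    (hsmall : 8*(n:ℝ)^2*(Real.sin h)^2 < 9) :
    0 ≤ (1/2)*(Real.cos h)^2*Real.sin h + Real.sin h * (1 + Real.cos (2*((n:ℝ)*h)))/2
      - 3/(4*(n:ℝ)) * (Real.sin (2*((n:ℝ)*h)) * Real.cos h) := by
  have hn0 : (0:ℝ) < n := by exact_mod_cast (by omega : 0 < n)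
  have hpi : π ≤ 3.1416 := by linarith [Real.pi_lt_d6]
  have hpil : (3.1415:ℝ) ≤ π := by linarith [Real.pi_gt_d6]
  have hh2 : h ≤ 1.5708 := by linarith
  have hsinh0 : 0 ≤ Real.sin h := Real.sin_nonneg_of_nonneg_of_le_pi hh0 (by linarith [Real.pi_gt_three])
  have hcosh0 : 0 ≤ Real.cos h := Real.cos_nonneg_of_mem_Icc ⟨by linarith, hhp⟩
  set v : ℝ := (n:ℝ)*h with hv
  have hv0 : 0 ≤ v := by positivity
  -- trivial subcase: sin (2v) ≤ 0
  rcases le_or_gt (Real.sin (2*v)) 0 with hs2v | hs2v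
  · have h1 : 0 ≤ 1 + Real.cos (2*v) := by linarith [Real.neg_one_le_cos (2*v)]
    have hterm : 3/(4*(n:ℝ)) * (Real.sin (2*v) * Real.cos h) ≤ 0 :=
      mul_nonpos_of_nonneg_of_nonpos (by positivity) (mul_nonpos_of_nonpos_of_nonneg hs2v hcosh0)
    nlinarith [mul_nonneg hsinh0 h1, mul_nonneg (mul_nonneg hcosh0 hcosh0) hsinh0]
  -- now sin (2v) > 0
  · -- h > 0
    have hhpos : 0 < h := by
      rcases hh0.eq_or_lt with rfl|hp
      · simp [hv] at hs2v
      · exact hp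
    have hsinlb : h - h^3/6 ≤ Real.sin h := sin_ge_t h hh0
    have hsq : h^2 ≤ 2.46742 := by nlinarith
    have hsinlb2 : 0.58875 * h ≤ Real.sin h := by nlinarith [mul_le_mul_of_nonneg_right hsq hh0]
    -- bound on v
    have hvb : v ≤ 1.81 := by
      by_contra hcon
      push_neg at hcon
      have h1 : (n:ℝ) * Real.sin h ≥ 0.58875 * v := by
        calc (n:ℝ) * Real.sin h ≥ (n:ℝ) * (0.58875*h) := by
              apply mul_le_mul_of_nonneg_left hsinlb2 hn0.le
          _ = 0.58875 * v := by rw [hv]; ring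
      nlinarith [sq_nonneg ((n:ℝ) * Real.sin h)]
    -- v ≤ π/2
    have hvpi : v ≤ π/2 := by
      by_contra hcon
      push_neg at hcon
      have h1 : Real.sin (2*v) = - Real.sin (2*v - π) := by
        have := Real.sin_add_pi (2*v - π)
        rw [show 2*v - π + π = 2*v by ring] at this
        linarith
      have h2 : 0 ≤ Real.sin (2*v - π) :=
        Real.sin_nonneg_of_nonneg_of_le_pi (by linarith) (by linarith)
      linarith
    have hv2 : v^2 ≤ 2.4675 := by nlinarith
    have hh3 : 3*h ≤ v := by
      rw [hv]
      have : (3:ℝ) ≤ (n:ℝ) := by exact_mod_cast hn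
      nlinarith
    -- Taylor bounds
    have hcosub : Real.cos h ≤ 1 - h^2/2 + h^4/24 := cos_le_t h hh0
    have hcos2v : 1 - (2*v)^2/2 + (2*v)^4/24 - (2*v)^6/720 ≤ Real.cos (2*v) := cos_ge_t (2*v) (by linarith)
    have hsin2v : Real.sin (2*v) ≤ (2*v) - (2*v)^3/6 + (2*v)^5/120 := sin_le_t (2*v) (by linarith)
    have hcossq : 1 - h^2 ≤ (Real.cos h)^2 := by
      have := Real.sin_sq_le_sq (x := h)
      have hpy := Real.sin_sq_add_cos_sq h
      nlinarith
    have hU2pos : (0:ℝ) ≤ 1 - h^2/2 + h^4/24 := by nlinarith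
    have hL1pos : (0:ℝ) ≤ h - h^3/6 := by nlinarith
    have hbrpos : 0 ≤ (Real.cos h)^2 + 1 + Real.cos (2*v) := by
      nlinarith [Real.neg_one_le_cos (2*v), sq_nonneg (Real.cos h)]
    -- chain
    have step1 : 3*h*(Real.sin (2*v) * Real.cos h) ≤ 3*h*((2*v - (4/3)*v^3 + (4/15)*v^5)*(1 - h^2/2 + h^4/24)) := by
      have e1 : Real.sin (2*v) * Real.cos h ≤ Real.sin (2*v) * (1 - h^2/2 + h^4/24) :=
        mul_le_mul_of_nonneg_left hcosub hs2v.le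
      have e2 : Real.sin (2*v) * (1 - h^2/2 + h^4/24) ≤ (2*v - (4/3)*v^3 + (4/15)*v^5) * (1 - h^2/2 + h^4/24) := by
        apply mul_le_mul_of_nonneg_right _ hU2pos
        linarith
      have e5 := mul_le_mul_of_nonneg_left (e1.trans e2) (by linarith : (0:ℝ) ≤ 3*h)
      linarith [e5]
    have step2 := key_poly v h hh0 hh3 hv2
    have step3 : 2*v*((h - h^3/6)*(3 - h^2 - 2*v^2 + (2/3)*v^4 - (4/45)*v^6))
        ≤ 2*v*(Real.sin h * ((Real.cos h)^2 + 1 + Real.cos (2*v))) := by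
      apply mul_le_mul_of_nonneg_left _ (by linarith : (0:ℝ) ≤ 2*v)
      have e3 : (h - h^3/6)*(3 - h^2 - 2*v^2 + (2/3)*v^4 - (4/45)*v^6)
          ≤ (h - h^3/6)*((Real.cos h)^2 + 1 + Real.cos (2*v)) := by
        apply mul_le_mul_of_nonneg_left _ hL1pos
        linarith
      have e4 : (h - h^3/6)*((Real.cos h)^2 + 1 + Real.cos (2*v))
          ≤ Real.sin h * ((Real.cos h)^2 + 1 + Real.cos (2*v)) :=
        mul_le_mul_of_nonneg_right hsinlb hbrpos
      linarith
    have key2 : 3*h*(Real.sin (2*v) * Real.cos h) ≤ 2*v*(Real.sin h * ((Real.cos h)^2 + 1 + Real.cos (2*v))) := by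
      linarith
    -- conclude
    have heq : (1/2)*(Real.cos h)^2*Real.sin h + Real.sin h * (1 + Real.cos (2*v))/2
        - 3/(4*(n:ℝ)) * (Real.sin (2*v) * Real.cos h)
        = (2*v*(Real.sin h * ((Real.cos h)^2 + 1 + Real.cos (2*v))) - 3*h*(Real.sin (2*v) * Real.cos h))/(4*v) := by
      rw [hv]
      field_simp
      ring
    rw [heq]
    apply div_nonneg (by linarith) (by positivity)

lemma sum_sin_mul (x : ℝ) : ∀ n : ℕ,
    (∑ k ∈ Finset.Icc 1 n, Real.sin (k * x)) * Real.sin (x/2)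
      = (Real.cos (x/2) - Real.cos ((n + 1/2) * x)) / 2 := by
  intro n
  induction n with
  | zero =>
    rw [show ((0:ℕ) + (1:ℝ)/2) * x = x/2 by push_cast; ring]
    norm_num
  | succ m ih =>
    rw [Finset.sum_Icc_succ_top (by omega : 1 ≤ m + 1)]
    have key : Real.cos ((m + 1/2) * x) - Real.cos ((m + 1 + 1/2) * x)
        = 2 * Real.sin ((m+1) * x) * Real.sin (x/2) := by
      rw [Real.cos_sub_cos,
        show (((m:ℝ) + 1/2) * x + ((m:ℝ) + 1 + 1/2) * x) / 2 = ((m:ℝ)+1) * x by ring,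
        show (((m:ℝ) + 1/2) * x - ((m:ℝ) + 1 + 1/2) * x) / 2 = -(x/2) by ring,
        Real.sin_neg]
      ring
    push_cast
    push_cast at ih
    nlinarith [ih, key]

set_option maxHeartbeats 1000000 in
theorem phi_nonneg (n : ℕ) (hn : 3 ≤ n) (hodd : Odd n) (x : ℝ)
    (hx : x ∈ Set.Icc 0 π) :
    0 ≤ (5 / 4) * Real.sin x + ∑ k ∈ Finset.Icc 2 (n - 1), Real.sin (k * x) +
      ((2 * (n : ℝ) - 3) / (4 * n)) * Real.sin (n * x) := by
  obtain ⟨hx0, hxπ⟩ := hx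
  have hn0 : (0:ℝ) < n := by exact_mod_cast (by omega : 0 < n)
  have hne : (n:ℝ) ≠ 0 := ne_of_gt hn0
  have hpipos := Real.pi_pos
  rcases hx0.eq_or_lt with rfl|hxpos
  · simp
  · have hσpos : 0 < Real.sin (x/2) :=
      Real.sin_pos_of_pos_of_lt_pi (by linarith) (by linarith)
    set σ := Real.sin (x/2) with hσdef
    set c := Real.cos (x/2) with hcdef
    set D := Real.cos ((n:ℝ)*x) with hDdef
    set E := Real.sin ((n:ℝ)*x) with hEdef
    have hσ0 : 0 ≤ σ := hσpos.le
    have hc0 : 0 ≤ c := Real.cos_nonneg_of_mem_Icc ⟨by linarith, by linarith⟩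
    have hcast : ((n-1:ℕ):ℝ) = (n:ℝ) - 1 := by
      rw [Nat.cast_sub (by omega)]; norm_num
    have hsum := sum_sin_mul x (n-1)
    rw [← hσdef, ← hcdef] at hsum
    have hang : (((n-1:ℕ):ℝ) + 1/2) * x = (n:ℝ)*x - x/2 := by rw [hcast]; ring
    have hcosang : Real.cos ((((n-1:ℕ):ℝ) + 1/2) * x) = D*c + E*σ := by
      rw [hang, Real.cos_sub, hDdef, hEdef, hcdef, hσdef]
    rw [hcosang] at hsum
    have hins : Finset.Icc 1 (n-1) = insert 1 (Finset.Icc 2 (n-1)) := by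
      ext k; simp only [Finset.mem_Icc, Finset.mem_insert]; omega
    have h1notin : (1:ℕ) ∉ Finset.Icc 2 (n-1) := by simp
    have hsplit : (∑ k ∈ Finset.Icc 1 (n-1), Real.sin (k*x))
        = Real.sin x + ∑ k ∈ Finset.Icc 2 (n-1), Real.sin (k*x) := by
      rw [hins, Finset.sum_insert h1notin]; norm_num
    rw [hsplit] at hsum
    have hsinx : Real.sin x = 2*σ*c := by
      have h2 := Real.sin_two_mul (x/2)
      rw [show 2*(x/2) = x by ring] at h2
      rw [hσdef, hcdef]; linarith [h2]
    have hB : (∑ k ∈ Finset.Icc 2 (n-1), Real.sin (k*x)) * σ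
        = (c - (D*c + E*σ))/2 - Real.sin x * σ := by
      linarith [hsum]
    have hkey : 0 ≤ (1/2)*σ^2*c + c*(1-D)/2 - 3/(4*(n:ℝ))*(E*σ) := by
      rcases le_or_gt 9 (8*(n:ℝ)^2*c^2) with hbig|hsmall
      · have hDE : D^2 + E^2 = 1 := by
          rw [hDdef, hEdef]; exact Real.cos_sq_add_sin_sq _
        have k1 := case1 n c σ D E hn hc0 hσ0 hDE hbig
        have heq : (1/2)*σ^2*c + c*(1-D)/2 - 3/(4*(n:ℝ))*(E*σ)
            = (2*(n:ℝ)*c*σ^2 + 2*(n:ℝ)*c*(1-D) - 3*E*σ)/(4*(n:ℝ)) := by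
          field_simp; ring
        rw [heq]
        apply div_nonneg (by linarith) (by positivity)
      · set h := π/2 - x/2 with hhdef
        have hsinh : Real.sin h = c := by rw [hhdef, Real.sin_pi_div_two_sub, hcdef]
        have hcosh : Real.cos h = σ := by rw [hhdef, Real.cos_pi_div_two_sub, hσdef]
        have hoddZ : Odd (n:ℤ) := by exact_mod_cast hodd
        have hnegpow : ((-1:ℝ))^(n:ℤ) = -1 := Odd.neg_one_zpow hoddZ
        have hangle : (n:ℝ)*x = ((n:ℤ):ℝ)*π - 2*((n:ℝ)*h) := by
          push_cast; rw [hhdef]; ring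
        have hD2 : D = -Real.cos (2*((n:ℝ)*h)) := by
          rw [hDdef, hangle, Real.cos_int_mul_pi_sub, hnegpow]; ring
        have hE2 : E = Real.sin (2*((n:ℝ)*h)) := by
          rw [hEdef, hangle, Real.sin_int_mul_pi_sub, hnegpow]; ring
        have hc2 := case2 n hn h (by rw [hhdef]; linarith) (by rw [hhdef]; linarith)
          (by rw [hsinh]; exact hsmall)
        rw [hsinh, hcosh] at hc2
        rw [hD2, hE2]
        linarith [hc2]
    have hGσeq : ((5 / 4) * Real.sin x + (∑ k ∈ Finset.Icc 2 (n - 1), Real.sin (k * x)) +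
          ((2 * (n : ℝ) - 3) / (4 * n)) * E) * σ
        = (1/2)*σ^2*c + c*(1-D)/2 - 3/(4*(n:ℝ))*(E*σ) := by
      rw [show ((5 / 4) * Real.sin x + (∑ k ∈ Finset.Icc 2 (n - 1), Real.sin (k * x)) +
          ((2 * (n : ℝ) - 3) / (4 * n)) * E) * σ
        = (5/4)*(Real.sin x * σ) + (∑ k ∈ Finset.Icc 2 (n - 1), Real.sin (k * x)) * σ
          + ((2*(n:ℝ)-3)/(4*(n:ℝ)))*(E*σ) from by ring, hB, hsinx]
      field_simp
      ring
    have hfin : 0*σ ≤ ((5 / 4) * Real.sin x + (∑ k ∈ Finset.Icc 2 (n - 1), Real.sin (k * x)) +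
        ((2 * (n : ℝ) - 3) / (4 * n)) * E) * σ := by
      rw [hGσeq]; linarith [hkey]
    exact le_of_mul_le_mul_right hfin hσpos
end

section
/- Let n ≥ 3 be an odd integer and let λ ≤ (2n−3)/(4n) be a real number. Then f_{κ,λ,n}(x) ≥ 0 for all x ∈ [0,π] if and only if κ ≥ (n+1)/2 − n·λ. -/
open Real Finset

set_option maxHeartbeats 1600000


lemma aux_nonneg_Ici {f f' : ℝ → ℝ} (hf : ∀ x, HasDerivAt f (f' x) x)
    (h0 : 0 ≤ f 0) (hd : ∀ x, 0 < x → 0 ≤ f' x) {x : ℝ} (hx : 0 ≤ x) : 0 ≤ f x := by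
  have hm : MonotoneOn f (Set.Ici 0) := by
    apply monotoneOn_of_deriv_nonneg (convex_Ici 0)
      (fun y _ => (hf y).continuousAt.continuousWithinAt)
      (fun y _ => (hf y).differentiableAt.differentiableWithinAt)
    intro y hy
    rw [interior_Ici] at hy
    rw [(hf y).deriv]
    exact hd y hy
  calc (0:ℝ) ≤ f 0 := h0
  _ ≤ f x := hm Set.self_mem_Ici hx hx

lemma aux_nonneg_Icc {b : ℝ} {f f' : ℝ → ℝ} (hf : ∀ x, HasDerivAt f (f' x) x)
    (h0 : 0 ≤ f 0) (hd : ∀ x, 0 < x → x < b → 0 ≤ f' x) {x : ℝ} (hx0 : 0 ≤ x) (hxb : x ≤ b) :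
    0 ≤ f x := by
  have hm : MonotoneOn f (Set.Icc 0 b) := by
    apply monotoneOn_of_deriv_nonneg (convex_Icc 0 b)
      (fun y _ => (hf y).continuousAt.continuousWithinAt)
      (fun y _ => (hf y).differentiableAt.differentiableWithinAt)
    intro y hy
    rw [interior_Icc] at hy
    rw [(hf y).deriv]
    exact hd y hy.1 hy.2
  calc (0:ℝ) ≤ f 0 := h0
  _ ≤ f x := hm (Set.left_mem_Icc.2 (hx0.trans hxb)) ⟨hx0, hxb⟩ ((le_refl 0).trans hx0)

lemma L1 {x : ℝ} (hx : 0 ≤ x) : Real.sin x ≤ x := by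
  have := aux_nonneg_Ici (f := fun t => t - Real.sin t) (f' := fun t => 1 - Real.cos t)
    (fun t => (hasDerivAt_id t).sub (Real.hasDerivAt_sin t))
    (by simp) (fun t _ => by nlinarith [Real.cos_le_one t]) hx
  linarith

lemma L2 {x : ℝ} (hx : 0 ≤ x) : 1 - x^2/2 ≤ Real.cos x := by
  have := aux_nonneg_Ici (f := fun t => Real.cos t - 1 + t^2/2) (f' := fun t => t - Real.sin t)
    (fun t => by
      have h := ((Real.hasDerivAt_cos t).fun_sub (hasDerivAt_const t 1)).fun_add
        ((hasDerivAt_pow 2 t).div_const 2)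
      refine h.congr_deriv ?_
      simp [Real.sin_le]
      ring)
    (by norm_num) (fun t ht => by linarith [L1 ht.le]) hx
  linarith

lemma L3 {x : ℝ} (hx : 0 ≤ x) : x - x^3/6 ≤ Real.sin x := by
  have := aux_nonneg_Ici (f := fun t => Real.sin t - t + t^3/6)
    (f' := fun t => Real.cos t - 1 + t^2/2)
    (fun t => by
      have h := ((Real.hasDerivAt_sin t).fun_sub (hasDerivAt_id t)).fun_add
        ((hasDerivAt_pow 3 t).div_const 6)
      refine h.congr_deriv ?_
      norm_num; ring)
    (by norm_num) (fun t ht => by linarith [L2 ht.le]) hx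
  linarith

lemma L4 {x : ℝ} (hx : 0 ≤ x) : Real.cos x ≤ 1 - x^2/2 + x^4/24 := by
  have := aux_nonneg_Ici (f := fun t => 1 - t^2/2 + t^4/24 - Real.cos t)
    (f' := fun t => -t + t^3/6 + Real.sin t)
    (fun t => by
      have h := (((hasDerivAt_const t 1).fun_sub ((hasDerivAt_pow 2 t).div_const 2)).fun_add
        ((hasDerivAt_pow 4 t).div_const 24)).fun_sub (Real.hasDerivAt_cos t)
      refine h.congr_deriv ?_
      norm_num; ring)
    (by norm_num) (fun t ht => by linarith [L3 ht.le]) hx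
  linarith

lemma L5 {x : ℝ} (hx : 0 ≤ x) : Real.sin x ≤ x - x^3/6 + x^5/120 := by
  have := aux_nonneg_Ici (f := fun t => t - t^3/6 + t^5/120 - Real.sin t)
    (f' := fun t => 1 - t^2/2 + t^4/24 - Real.cos t)
    (fun t => by
      have h := (((hasDerivAt_id t).fun_sub ((hasDerivAt_pow 3 t).div_const 6)).fun_add
        ((hasDerivAt_pow 5 t).div_const 120)).fun_sub (Real.hasDerivAt_sin t)
      refine h.congr_deriv ?_
      norm_num; ring)
    (by norm_num) (fun t ht => by linarith [L4 ht.le]) hx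
  linarith

lemma L6 {x : ℝ} (hx : 0 ≤ x) : 1 - x^2/2 + x^4/24 - x^6/720 ≤ Real.cos x := by
  have := aux_nonneg_Ici (f := fun t => Real.cos t - 1 + t^2/2 - t^4/24 + t^6/720)
    (f' := fun t => -Real.sin t + t - t^3/6 + t^5/120)
    (fun t => by
      have h := ((((Real.hasDerivAt_cos t).fun_sub (hasDerivAt_const t 1)).fun_add
        ((hasDerivAt_pow 2 t).div_const 2)).fun_sub ((hasDerivAt_pow 4 t).div_const 24)).fun_add
        ((hasDerivAt_pow 6 t).div_const 720)
      refine h.congr_deriv ?_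
      norm_num; ring)
    (by norm_num) (fun t ht => by linarith [L5 ht.le]) hx
  linarith

lemma L6b {x : ℝ} (hx : 0 ≤ x) : x - x^3/6 + x^5/120 - x^7/5040 ≤ Real.sin x := by
  have := aux_nonneg_Ici
    (f := fun t => Real.sin t - t + t^3/6 - t^5/120 + t^7/5040)
    (f' := fun t => Real.cos t - 1 + t^2/2 - t^4/24 + t^6/720)
    (fun t => by
      have h := ((((Real.hasDerivAt_sin t).fun_sub (hasDerivAt_id t)).fun_add
        ((hasDerivAt_pow 3 t).div_const 6)).fun_sub ((hasDerivAt_pow 5 t).div_const 120)).fun_add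
        ((hasDerivAt_pow 7 t).div_const 5040)
      refine h.congr_deriv ?_
      norm_num; ring)
    (by norm_num) (fun t ht => by linarith [L6 ht.le]) hx
  linarith

lemma L6c {x : ℝ} (hx : 0 ≤ x) :
    Real.cos x ≤ 1 - x^2/2 + x^4/24 - x^6/720 + x^8/40320 := by
  have := aux_nonneg_Ici
    (f := fun t => 1 - t^2/2 + t^4/24 - t^6/720 + t^8/40320 - Real.cos t)
    (f' := fun t => -t + t^3/6 - t^5/120 + t^7/5040 + Real.sin t)
    (fun t => by
      have h := (((((hasDerivAt_const t 1).fun_sub ((hasDerivAt_pow 2 t).div_const 2)).fun_add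
        ((hasDerivAt_pow 4 t).div_const 24)).fun_sub ((hasDerivAt_pow 6 t).div_const 720)).fun_add
        ((hasDerivAt_pow 8 t).div_const 40320)).fun_sub (Real.hasDerivAt_cos t)
      refine h.congr_deriv ?_
      norm_num; ring)
    (by norm_num) (fun t ht => by linarith [L6b ht.le]) hx
  linarith

lemma L7 {x : ℝ} (hx : 0 ≤ x) :
    Real.sin x ≤ x - x^3/6 + x^5/120 - x^7/5040 + x^9/362880 := by
  have := aux_nonneg_Ici
    (f := fun t => t - t^3/6 + t^5/120 - t^7/5040 + t^9/362880 - Real.sin t)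
    (f' := fun t => 1 - t^2/2 + t^4/24 - t^6/720 + t^8/40320 - Real.cos t)
    (fun t => by
      have h := (((((hasDerivAt_id t).fun_sub ((hasDerivAt_pow 3 t).div_const 6)).fun_add
        ((hasDerivAt_pow 5 t).div_const 120)).fun_sub ((hasDerivAt_pow 7 t).div_const 5040)).fun_add
        ((hasDerivAt_pow 9 t).div_const 362880)).fun_sub (Real.hasDerivAt_sin t)
      refine h.congr_deriv ?_
      norm_num; ring)
    (by norm_num) (fun t ht => by linarith [L6c ht.le]) hx
  linarith

lemma M1 {x : ℝ} (hx0 : 0 ≤ x) (hx1 : x ≤ 1) : x * Real.cos x ≤ Real.sin x := by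
  have := aux_nonneg_Icc (b := 1) (f := fun t => Real.sin t - t * Real.cos t)
    (f' := fun t => t * Real.sin t)
    (fun t => by
      have h := (Real.hasDerivAt_sin t).sub
        (((hasDerivAt_id t).fun_mul (Real.hasDerivAt_cos t)))
      refine h.congr_deriv ?_
      simp)
    (by norm_num) (fun t ht ht1 => by
      have hs : 0 ≤ Real.sin t :=
        Real.sin_nonneg_of_nonneg_of_le_pi ht.le (by linarith [Real.pi_gt_three])
      exact mul_nonneg ht.le hs) hx0 hx1
  linarith

lemma M2 {x : ℝ} (hx0 : 0 ≤ x) (hx1 : x ≤ 1) :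
    (x + x^3/3) * Real.cos x ≤ Real.sin x := by
  have := aux_nonneg_Icc (b := 1) (f := fun t => Real.sin t - (t + t^3/3) * Real.cos t)
    (f' := fun t => -(t^2 * Real.cos t) + (t + t^3/3) * Real.sin t)
    (fun t => by
      have h := (Real.hasDerivAt_sin t).sub
        ((((hasDerivAt_id t).fun_add ((hasDerivAt_pow 3 t).div_const 3)).mul
          (Real.hasDerivAt_cos t)))
      refine h.congr_deriv ?_
      norm_num; ring)
    (by norm_num)
    (fun t ht ht1 => by
      have hc : 0 ≤ Real.cos t := by nlinarith [L2 ht.le]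
      have hm := M1 ht.le ht1.le
      have h2 := mul_le_mul_of_nonneg_left hm (show (0:ℝ) ≤ t + t^3/3 by positivity)
      nlinarith [mul_nonneg (mul_nonneg (mul_nonneg ht.le ht.le) (mul_nonneg ht.le ht.le)) hc])
    hx0 hx1
  linarith


lemma coreB {φ y : ℝ} (hφ : 0 < φ) (h6 : 6*φ ≤ y) (h22 : y ≤ 2.2) :
    0 ≤ y * Real.sin φ * (1 + Real.cos φ^2 + Real.cos y) - 3*φ*Real.cos φ*Real.sin y := by
  have hy0 : 0 < y := lt_of_lt_of_le (by linarith) h6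
  have hφ37 : φ ≤ 0.367 := by linarith
  have hcφ0 : (0:ℝ) < Real.cos φ := by nlinarith [L2 hφ.le]
  have hsφφ : Real.sin φ ≤ φ := L1 hφ.le
  have hφ2' : φ^2 ≤ 0.135 := by nlinarith
  have hsφ0 : 0 ≤ Real.sin φ := by nlinarith [L3 hφ.le, mul_le_mul_of_nonneg_left hφ2' hφ.le]
  have h1cc : 1 - φ^2 ≤ Real.cos φ^2 := by
    have := Real.sin_sq_add_cos_sq φ
    nlinarith
  have hcy1 : Real.cos y ≤ 1 := Real.cos_le_one y
  have hcyl : 1 - y^2/2 + y^4/24 - y^6/720 ≤ Real.cos y := L6 hy0.le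
  have hy2 : y^2 ≤ 4.84 := by nlinarith
  have hy4 : y^4 ≤ 23.4256 := by nlinarith
  have h30 : 0 ≤ y^4 * (30 - y^2) := mul_nonneg (by positivity) (by linarith)
  have hcyl2 : 1 - y^2/2 ≤ Real.cos y := by linarith
  have hsyu : Real.sin y ≤ y - y^3/6 + y^5/120 - y^7/5040 + y^9/362880 := L7 hy0.le
  have hX : 0 ≤ 1 + Real.cos φ^2 + Real.cos y := by
    nlinarith [Real.neg_one_le_cos y, sq_nonneg (Real.cos φ)]
  have htan : (φ + φ^3/3) * Real.cos φ ≤ Real.sin φ := M2 hφ.le (by linarith)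
  have hp : y^5/60 - y^7/1260 - y^9/120960 ≤ y*(2+Real.cos y) - 3*Real.sin y := by
    have h := mul_le_mul_of_nonneg_left hcyl hy0.le
    linarith
  have hφ2 : φ^2 ≤ y^2/36 := by nlinarith [mul_self_le_mul_self (by linarith : (0:ℝ) ≤ 6*φ) h6]
  have hcorr : (y*φ^2/3) * (1 + φ^2 - Real.cos y) ≤ (y^3/108) * (19*y^2/36) := by
    have h1 : 1 + φ^2 - Real.cos y ≤ 19*y^2/36 := by linarith
    have h2 : y*φ^2/3 ≤ y^3/108 := by
      have := mul_le_mul_of_nonneg_left hφ2 (by positivity : (0:ℝ) ≤ y/3)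
      linarith
    have h3 : 0 ≤ 1 + φ^2 - Real.cos y := by nlinarith [sq_nonneg φ]
    exact mul_le_mul h2 h1 h3 (by positivity)
  have h5 : (0:ℝ) < y^5 := by positivity
  have h7 : y^5 * y^2 ≤ y^5 * 4.84 := mul_le_mul_of_nonneg_left hy2 h5.le
  have h9 : y^5 * y^4 ≤ y^5 * 23.4256 := mul_le_mul_of_nonneg_left hy4 h5.le
  have hA' : 0 ≤ y*(1+φ^2/3)*(2-φ^2+Real.cos y) - 3*Real.sin y := by
    have hid : y*(1+φ^2/3)*(2-φ^2+Real.cos y) - 3*Real.sin y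
        = (y*(2+Real.cos y) - 3*Real.sin y) - (y*φ^2/3)*(1+φ^2-Real.cos y) := by ring
    rw [hid]
    linarith
  have hA : 3*Real.sin y ≤ y*(1+φ^2/3)*(1+Real.cos φ^2+Real.cos y) := by
    have hs3 : y*(1+φ^2/3)*(2-φ^2+Real.cos y)
        ≤ y*(1+φ^2/3)*(1+Real.cos φ^2+Real.cos y) := by
      apply mul_le_mul_of_nonneg_left (by linarith) (by positivity)
    linarith
  have hmul := mul_le_mul_of_nonneg_left hA (mul_nonneg hφ.le hcφ0.le)
  have hs1 : y*((φ+φ^3/3)*Real.cos φ)*(1+Real.cos φ^2+Real.cos y)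
      ≤ y*Real.sin φ*(1+Real.cos φ^2+Real.cos y) :=
    mul_le_mul_of_nonneg_right (mul_le_mul_of_nonneg_left htan hy0.le) hX
  nlinarith [hmul, hs1]


lemma Pnonneg (n : ℕ) (hn : 3 ≤ n) (hodd : Odd n) {θ : ℝ} (h0 : 0 ≤ θ) (h2 : θ ≤ π/2) :
    0 ≤ 4*Real.cos θ*(1+Real.sin θ^2) - 4*Real.cos (2*n*θ)*Real.cos θ
      - (6/n)*Real.sin (2*n*θ)*Real.sin θ := by
  have hn3 : (3:ℝ) ≤ n := by exact_mod_cast hn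
  have hn0 : (0:ℝ) < n := by linarith
  have hc0 : 0 ≤ Real.cos θ := Real.cos_nonneg_of_mem_Icc ⟨by linarith [Real.pi_pos], h2⟩
  have hs0 : 0 ≤ Real.sin θ :=
    Real.sin_nonneg_of_nonneg_of_le_pi h0 (by linarith [Real.pi_pos])
  have hsc := Real.sin_sq_add_cos_sq θ
  have huv := Real.sin_sq_add_cos_sq (2*n*θ)
  by_cases hA : 9 ≤ 8*(n:ℝ)^2*Real.cos θ^2
  · -- Case A
    have h1 : (4*n*Real.cos θ*Real.cos (2*n*θ) + 6*Real.sin θ*Real.sin (2*n*θ))^2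
        ≤ 16*(n*Real.cos θ)^2 + 36*Real.sin θ^2 := by
      nlinarith [sq_nonneg (4*n*Real.cos θ*Real.sin (2*n*θ) - 6*Real.sin θ*Real.cos (2*n*θ))]
    have h32 : (0:ℝ) ≤ 32*n^2*Real.cos θ^2 - 36 := by linarith
    have h2' : 16*(n*Real.cos θ)^2 + 36*Real.sin θ^2
        ≤ (4*n*Real.cos θ*(1+Real.sin θ^2))^2 := by
      nlinarith [mul_nonneg (sq_nonneg (Real.sin θ)) h32, sq_nonneg (n*Real.cos θ*Real.sin θ^2)]
    have hL : 0 ≤ 4*n*Real.cos θ*(1+Real.sin θ^2) := by positivity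
    have key : 4*n*Real.cos θ*Real.cos (2*n*θ) + 6*Real.sin θ*Real.sin (2*n*θ)
        ≤ 4*n*Real.cos θ*(1+Real.sin θ^2) := by
      rcases le_or_gt (4*n*Real.cos θ*Real.cos (2*n*θ) + 6*Real.sin θ*Real.sin (2*n*θ))
        (4*n*Real.cos θ*(1+Real.sin θ^2)) with h | h
      · exact h
      · exfalso; nlinarith [h1.trans h2']
    have heq : 4*Real.cos θ*(1+Real.sin θ^2) - 4*Real.cos (2*n*θ)*Real.cos θ
        - (6/n)*Real.sin (2*n*θ)*Real.sin θ
        = (4*n*Real.cos θ*(1+Real.sin θ^2)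
          - (4*n*Real.cos θ*Real.cos (2*n*θ) + 6*Real.sin θ*Real.sin (2*n*θ)))/n := by
      field_simp; ring
    rw [heq]
    exact div_nonneg (by linarith) hn0.le
  · -- Case B
    push_neg at hA
    have hθeq : θ = π/2 - (π/2 - θ) := by ring
    by_cases hφ0 : π/2 - θ = 0
    · have hθ : θ = π/2 := by linarith
      subst hθ
      have h2n : 2*(n:ℝ)*(π/2) = n*π := by ring
      rw [h2n, Real.sin_nat_mul_pi, Real.cos_pi_div_two]
      ring_nf
      exact le_refl 0
    · set φ := π/2 - θ with hφdef
      have hφpos : 0 < φ := lt_of_le_of_ne (by simp [hφdef]; linarith) (Ne.symm hφ0)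
      have hφle : φ ≤ π/2 := by simp [hφdef]; linarith
      have hc : Real.cos θ = Real.sin φ := by rw [hφdef, Real.sin_pi_div_two_sub]
      have hs : Real.sin θ = Real.cos φ := by rw [hφdef, Real.cos_pi_div_two_sub]
      have hsin8 : 8*(n:ℝ)^2*Real.sin φ^2 < 9 := by rw [← hc]; exact hA
      have hsφ0 : 0 ≤ Real.sin φ := by rw [← hc]; exact hc0
      have hφ37 : φ ≤ 0.37 := by
        by_contra hcon
        push_neg at hcon
        have hm : Real.sin 0.37 < Real.sin φ := by
          apply Real.strictMonoOn_sin ⟨by norm_num; linarith [Real.pi_gt_three], by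
            norm_num; linarith [Real.pi_gt_three]⟩ ⟨by linarith, hφle⟩ hcon
        have h37 : (0.3615:ℝ) ≤ Real.sin 0.37 := by nlinarith [L3 (by norm_num : (0:ℝ) ≤ 0.37)]
        have hn9 : (9:ℝ) ≤ (n:ℝ)^2 := by nlinarith
        have hs37 : (0.3615:ℝ) ≤ Real.sin φ := by linarith
        have hs2 : (0.3615:ℝ)^2 ≤ Real.sin φ^2 := by nlinarith
        nlinarith [mul_le_mul hn9 hs2 (by positivity) (by positivity)]
      have hφ2 : φ^2 ≤ 0.1369 := by nlinarith
      have hlb : 0.977*φ ≤ Real.sin φ := by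
        nlinarith [L3 hφpos.le, mul_le_mul_of_nonneg_left hφ2 hφpos.le]
      have h6φ : 6*φ ≤ 2*n*φ := by nlinarith
      have h1y : 0.977*(2*n*φ) ≤ 2*n*Real.sin φ := by nlinarith
      have hy22 : 2*(n:ℝ)*φ ≤ 2.2 := by
        by_contra hcon
        push_neg at hcon
        have hsq := mul_self_le_mul_self (by positivity : (0:ℝ) ≤ 0.977*(2*(n:ℝ)*φ)) h1y
        nlinarith [hsq, hsin8]
      have h2nθ : 2*(n:ℝ)*θ = n*π - 2*n*φ := by rw [hφdef]; ring
      rw [h2nθ, Real.cos_nat_mul_pi_sub, Real.sin_nat_mul_pi_sub, hodd.neg_one_pow, hc, hs]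
      have hQ := coreB hφpos h6φ hy22
      have key : (2*(n:ℝ)*φ) * (4*Real.sin φ*(1+Real.cos φ^2) - 4*(-1*Real.cos (2*n*φ))*Real.sin φ
          - (6/n)*(-(-1*Real.sin (2*n*φ)))*Real.cos φ)
          = 4*(2*n*φ * Real.sin φ * (1 + Real.cos φ^2 + Real.cos (2*n*φ))
            - 3*φ*Real.cos φ*Real.sin (2*n*φ)) := by
        field_simp; ring
      have hpos : 0 < 2*(n:ℝ)*φ := by positivity
      have hkey2 : 0 ≤ (2*(n:ℝ)*φ) * (4*Real.sin φ*(1+Real.cos φ^2)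
          - 4*(-1*Real.cos (2*n*φ))*Real.sin φ
          - (6/n)*(-(-1*Real.sin (2*n*φ)))*Real.cos φ) := by rw [key]; linarith
      have hexpr := (mul_nonneg_iff_of_pos_left hpos).mp hkey2
      linarith [hexpr]



lemma sum_sin_id (θ : ℝ) (n : ℕ) (hn : 3 ≤ n) :
    2 * Real.sin θ * ∑ k ∈ Finset.Icc 2 (n-1), Real.sin (k*(2*θ))
      = Real.cos (3*θ) - Real.cos ((2*(n:ℝ)-1)*θ) := by
  induction n, hn using Nat.le_induction with
  | base =>
    norm_num
    have h := Real.cos_sub_cos (3*θ) (5*θ)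
    rw [show (3*θ+5*θ)/2 = 4*θ by ring, show (3*θ-5*θ)/2 = -θ by ring, Real.sin_neg] at h
    rw [show (2:ℝ)*(2*θ) = 4*θ by ring]
    linarith [h]
  | succ n hn hIH =>
    have hrw : n + 1 - 1 = (n-1) + 1 := by omega
    rw [hrw, Finset.sum_Icc_succ_top (by omega : 2 ≤ (n-1)+1)]
    have hn1 : n - 1 + 1 = n := by omega
    rw [hn1, mul_add, hIH]
    have h := Real.cos_sub_cos ((2*(n:ℝ)-1)*θ) ((2*(n:ℝ)+1)*θ)
    rw [show ((2*(n:ℝ)-1)*θ + (2*(n:ℝ)+1)*θ)/2 = 2*n*θ by ring,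
      show ((2*(n:ℝ)-1)*θ - (2*(n:ℝ)+1)*θ)/2 = -θ by ring, Real.sin_neg] at h
    have h2 : ((n:ℕ):ℝ)*(2*θ) = 2*(n:ℝ)*θ := by push_cast; ring
    rw [h2]
    push_cast
    rw [show (2*((n:ℝ)+1)-1)*θ = (2*(n:ℝ)+1)*θ by ring]
    linarith [h]

lemma abs_sin_nat_mul_le (x : ℝ) (k : ℕ) : |Real.sin (k*x)| ≤ k * |Real.sin x| := by
  induction k with
  | zero => simp
  | succ k IH =>
    have h1 : ((k+1:ℕ):ℝ)*x = (k:ℝ)*x + x := by push_cast; ring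
    rw [h1, Real.sin_add]
    calc |Real.sin ((k:ℝ)*x) * Real.cos x + Real.cos ((k:ℝ)*x) * Real.sin x|
        ≤ |Real.sin ((k:ℝ)*x) * Real.cos x| + |Real.cos ((k:ℝ)*x) * Real.sin x| := abs_add_le _ _
      _ ≤ |Real.sin ((k:ℝ)*x)| * 1 + 1 * |Real.sin x| := by
          rw [abs_mul, abs_mul]
          gcongr
          · exact Real.abs_cos_le_one x
          · exact Real.abs_cos_le_one _
      _ ≤ (k:ℝ) * |Real.sin x| + 1 * |Real.sin x| := by
          have := IH
          nlinarith [abs_nonneg (Real.sin x)]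
      _ = ((k+1:ℕ):ℝ) * |Real.sin x| := by push_cast; ring

lemma key_id (n : ℕ) (hn : 3 ≤ n) (θ : ℝ) :
    8 * Real.sin θ * ((5/4) * Real.sin (2*θ)
      + (∑ k ∈ Finset.Icc 2 (n-1), Real.sin (k*(2*θ)))
      + (2*(n:ℝ)-3)/(4*n) * Real.sin ((n:ℝ)*(2*θ)))
    = 4*Real.cos θ*(1+Real.sin θ^2) - 4*Real.cos (2*n*θ)*Real.cos θ
      - (6/n)*Real.sin (2*n*θ)*Real.sin θ := by
  have hn0 : (n:ℝ) ≠ 0 := by positivity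
  have hs := sum_sin_id θ n hn
  have h1 : 2*Real.sin θ*Real.sin (2*θ) = Real.cos θ - Real.cos (3*θ) := by
    have h := Real.cos_sub_cos θ (3*θ)
    rw [show (θ+3*θ)/2 = 2*θ by ring, show (θ-3*θ)/2 = -θ by ring, Real.sin_neg] at h
    linarith
  have h2 : 2*Real.sin θ*Real.sin (2*(n:ℝ)*θ)
      = Real.cos ((2*(n:ℝ)-1)*θ) - Real.cos ((2*(n:ℝ)+1)*θ) := by
    have h := Real.cos_sub_cos ((2*(n:ℝ)-1)*θ) ((2*(n:ℝ)+1)*θ)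
    rw [show ((2*(n:ℝ)-1)*θ + (2*(n:ℝ)+1)*θ)/2 = 2*n*θ by ring,
      show ((2*(n:ℝ)-1)*θ - (2*(n:ℝ)+1)*θ)/2 = -θ by ring, Real.sin_neg] at h
    linarith
  have h3 : Real.cos ((2*(n:ℝ)-1)*θ)
      = Real.cos (2*n*θ)*Real.cos θ + Real.sin (2*n*θ)*Real.sin θ := by
    rw [show (2*(n:ℝ)-1)*θ = 2*n*θ - θ by ring, Real.cos_sub]
  have h4 : Real.cos ((2*(n:ℝ)+1)*θ)
      = Real.cos (2*n*θ)*Real.cos θ - Real.sin (2*n*θ)*Real.sin θ := by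
    rw [show (2*(n:ℝ)+1)*θ = 2*n*θ + θ by ring, Real.cos_add]
  have h5 := Real.cos_three_mul θ
  have h6 : Real.sin θ^2 = 1 - Real.cos θ^2 := by
    have := Real.sin_sq_add_cos_sq θ; linarith
  have h7 : (n:ℝ)*(2*θ) = 2*(n:ℝ)*θ := by ring
  rw [h7, h6]
  rw [h3, h4] at h2; rw [h3] at hs
  rw [h5] at hs h1
  have ha : (2*(n:ℝ)-3)/(4*(n:ℝ)) * (4*(n:ℝ)) = 2*(n:ℝ)-3 := by field_simp
  have hb : 6/(n:ℝ) * (n:ℝ) = 6 := by field_simp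
  apply mul_left_cancel₀ hn0
  linear_combination (5*(n:ℝ))*h1 + (4*(n:ℝ))*hs
    + (2*Real.sin θ*Real.sin (2*(n:ℝ)*θ))*ha + (Real.sin θ*Real.sin (2*(n:ℝ)*θ))*hb


lemma altsum (m : ℕ) (hm : 1 ≤ m) :
    ∑ k ∈ Finset.Icc 2 (2*m), ((-1:ℝ))^k * k = (m:ℝ) + 1 := by
  induction m, hm using Nat.le_induction with
  | base => norm_num
  | succ m hm IH =>
    have h1 : 2*(m+1) = (2*m+1) + 1 := by ring
    rw [h1, Finset.sum_Icc_succ_top (by omega), show 2*m+1 = (2*m)+1 from rfl,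
      Finset.sum_Icc_succ_top (by omega), IH]
    have hpow : ((-1:ℝ))^(2*m) = 1 := Even.neg_one_pow (even_two_mul m)
    simp [pow_succ, hpow]
    push_cast
    ring

theorem kappa_zero_odd_small_lambda (n : ℕ) (hn : 3 ≤ n) (hodd : Odd n)
    (lam : ℝ) (hlam : lam ≤ (2 * (n : ℝ) - 3) / (4 * n)) (κ : ℝ) :
    (∀ x ∈ Set.Icc (0 : ℝ) π,
      0 ≤ κ * Real.sin x + ∑ k ∈ Finset.Icc 2 (n - 1), Real.sin (k * x) +
        lam * Real.sin (n * x)) ↔ ((n : ℝ) + 1) / 2 - n * lam ≤ κ := by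
  have hn3 : (3:ℝ) ≤ n := by exact_mod_cast hn
  have hn0 : (0:ℝ) < n := by linarith
  have hn0' : (n:ℝ) ≠ 0 := ne_of_gt hn0
  constructor
  · -- necessity
    intro h
    set F : ℝ → ℝ := fun x => κ * Real.sin x + ∑ k ∈ Finset.Icc 2 (n - 1), Real.sin (k * x) +
        lam * Real.sin (n * x) with hF
    have hcosk : ∀ k : ℕ, Real.cos (k*π) = (-1:ℝ)^k := by
      intro k
      have := Real.cos_nat_mul_pi_sub 0 k
      simpa using this
    have hder : HasDerivAt F (κ * Real.cos π
        + (∑ k ∈ Finset.Icc 2 (n-1), (k:ℝ) * Real.cos (k*π))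
        + lam * ((n:ℝ) * Real.cos (n*π))) π := by
      apply HasDerivAt.add
      apply HasDerivAt.add
      · exact (Real.hasDerivAt_sin π).const_mul κ
      · apply HasDerivAt.fun_sum
        intro k _
        have h := ((hasDerivAt_id π).const_mul (k:ℝ)).sin
        refine h.congr_deriv ?_
        simp [mul_comm]
      · have h := (((hasDerivAt_id π).const_mul (n:ℝ)).sin).const_mul lam
        refine h.congr_deriv ?_
        simp [mul_comm]
    have hsum : (∑ k ∈ Finset.Icc 2 (n-1), (k:ℝ) * Real.cos (k*π)) = ((n:ℝ)+1)/2 := by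
      obtain ⟨m, hm⟩ := hodd
      have hm1 : 1 ≤ m := by omega
      have he : n - 1 = 2*m := by omega
      rw [he]
      have := altsum m hm1
      calc ∑ k ∈ Finset.Icc 2 (2*m), (k:ℝ) * Real.cos (k*π)
          = ∑ k ∈ Finset.Icc 2 (2*m), ((-1:ℝ))^k * k := by
            apply Finset.sum_congr rfl
            intro k _
            rw [hcosk k]; ring
        _ = (m:ℝ) + 1 := this
        _ = ((n:ℝ)+1)/2 := by rw [hm]; push_cast; ring
    have hcosn : Real.cos ((n:ℝ)*π) = -1 := by rw [hcosk n, hodd.neg_one_pow]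
    have hDval : κ * Real.cos π + (∑ k ∈ Finset.Icc 2 (n-1), (k:ℝ) * Real.cos (k*π))
        + lam * ((n:ℝ) * Real.cos (n*π)) = -κ + ((n:ℝ)+1)/2 - n*lam := by
      rw [Real.cos_pi, hsum, hcosn]; ring
    rw [hDval] at hder
    have hFπ : F π = 0 := by
      simp [hF, Real.sin_pi, Real.sin_nat_mul_pi]
    have hslope := hasDerivAt_iff_tendsto_slope.mp hder
    have hmono : Filter.Tendsto (slope F π) (nhdsWithin π (Set.Iio π))
        (nhds (-κ + ((n:ℝ)+1)/2 - n*lam)) :=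
      hslope.mono_left (nhdsWithin_mono π (fun z hz => ne_of_lt hz))
    have hev : ∀ᶠ z in nhdsWithin π (Set.Iio π), slope F π z ≤ 0 := by
      filter_upwards [Ioo_mem_nhdsLT_of_mem (⟨Real.pi_pos, le_refl π⟩ : π ∈ Set.Ioc 0 π)]
        with z hz
      have hFz : 0 ≤ F z := h z ⟨hz.1.le, hz.2.le⟩
      have : slope F π z = (F z - F π) / (z - π) := slope_def_field F π z
      rw [this, hFπ]
      apply div_nonpos_of_nonneg_of_nonpos
      · linarith
      · linarith [hz.2]
    have hD := le_of_tendsto hmono hev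
    linarith
  · -- sufficiency
    intro hκ x hx
    obtain ⟨hx0, hxπ⟩ := hx
    have hsx : 0 ≤ Real.sin x := Real.sin_nonneg_of_nonneg_of_le_pi hx0 hxπ
    have hnsin : Real.sin ((n:ℝ)*x) ≤ (n:ℝ) * Real.sin x := by
      have h := abs_sin_nat_mul_le x n
      rw [abs_of_nonneg hsx] at h
      calc Real.sin ((n:ℝ)*x) ≤ |Real.sin ((n:ℝ)*x)| := le_abs_self _
        _ ≤ (n:ℝ) * Real.sin x := h
    have hG : 0 ≤ 5/4*Real.sin x + (∑ k ∈ Finset.Icc 2 (n-1), Real.sin (k*x))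
        + (2*(n:ℝ)-3)/(4*(n:ℝ))*Real.sin ((n:ℝ)*x) := by
      rcases eq_or_lt_of_le hx0 with h0 | h0
      · rw [← h0]
        simp
      · have hkey := key_id n hn (x/2)
        simp only [show 2*(x/2) = x from by ring] at hkey
        have hP := Pnonneg n hn hodd (θ := x/2) (by linarith) (by linarith)
        have hs2 : 0 < Real.sin (x/2) :=
          Real.sin_pos_of_pos_of_lt_pi (by linarith) (by linarith [Real.pi_pos])
        have h8 : (0:ℝ) < 8 * Real.sin (x/2) := by linarith
        have := (mul_nonneg_iff_of_pos_left h8).mp (by rw [hkey]; exact hP)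
        linarith [this]
    have hid : κ * Real.sin x + (∑ k ∈ Finset.Icc 2 (n-1), Real.sin (k*x))
        + lam * Real.sin ((n:ℝ)*x)
        = (5/4*Real.sin x + (∑ k ∈ Finset.Icc 2 (n-1), Real.sin (k*x))
            + (2*(n:ℝ)-3)/(4*(n:ℝ))*Real.sin ((n:ℝ)*x))
          + (κ - (((n:ℝ)+1)/2 - n*lam)) * Real.sin x
          + ((2*(n:ℝ)-3)/(4*(n:ℝ)) - lam) * ((n:ℝ)*Real.sin x - Real.sin ((n:ℝ)*x)) := by
      field_simp
      simp only [mul_comm x]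
      ring
    rw [hid]
    have hb : 0 ≤ (2*(n:ℝ)-3)/(4*(n:ℝ)) - lam := by linarith
    have h2 : 0 ≤ (κ - (((n:ℝ)+1)/2 - n*lam)) * Real.sin x :=
      mul_nonneg (by linarith) hsx
    have h3 : 0 ≤ ((2*(n:ℝ)-3)/(4*(n:ℝ)) - lam) * ((n:ℝ)*Real.sin x - Real.sin ((n:ℝ)*x)) :=
      mul_nonneg hb (by linarith)
    linarith
end

section
/- Let n ≥ 3 be an odd integer and let λ be a real number with (2n−3)/(4n) < λ ≤ 1/2. Then the polynomial f_{κ,λ,n} with κ = (n+1)/2 − n·λ is NOT nonnegative on [0,π]; that is, there exists x ∈ [0,π] with f_{κ,λ,n}(x) < 0. -/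
open Real Finset

lemma alt_sum1 (p : ℕ) : ∑ k ∈ Finset.Icc 1 (2*p), (-1:ℝ)^(k+1) * (k:ℝ) = -(p:ℝ) := by
  induction p with
  | zero => simp
  | succ p ih =>
    have h1 : 2*(p+1) = (2*p+1)+1 := by ring
    rw [h1, Finset.sum_Icc_succ_top (by omega), Finset.sum_Icc_succ_top (by omega), ih]
    have e1 : ((-1:ℝ))^(2*p+1+1) = 1 := Even.neg_one_pow ⟨p+1, by ring⟩
    have e2 : ((-1:ℝ))^(2*p+1+1+1) = -1 := Odd.neg_one_pow ⟨p+1, by ring⟩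
    rw [e1, e2]; push_cast; ring

lemma alt_sum3 (p : ℕ) : ∑ k ∈ Finset.Icc 1 (2*p), (-1:ℝ)^(k+1) * (k:ℝ)^3 = -(4*(p:ℝ)^3 + 3*(p:ℝ)^2) := by
  induction p with
  | zero => simp
  | succ p ih =>
    have h1 : 2*(p+1) = (2*p+1)+1 := by ring
    rw [h1, Finset.sum_Icc_succ_top (by omega), Finset.sum_Icc_succ_top (by omega), ih]
    have e1 : ((-1:ℝ))^(2*p+1+1) = 1 := Even.neg_one_pow ⟨p+1, by ring⟩
    have e2 : ((-1:ℝ))^(2*p+1+1+1) = -1 := Odd.neg_one_pow ⟨p+1, by ring⟩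
    rw [e1, e2]; push_cast; ring

lemma alt_sum1' (p : ℕ) (hp : 1 ≤ p) :
    ∑ k ∈ Finset.Icc 2 (2*p), (-1:ℝ)^(k+1) * (k:ℝ) = -(p:ℝ) - 1 := by
  have he : (Finset.Icc 1 (2*p)).erase 1 = Finset.Icc 2 (2*p) := by
    ext x; simp only [Finset.mem_erase, Finset.mem_Icc]; omega
  have h1 : (1:ℕ) ∈ Finset.Icc 1 (2*p) := by simp; omega
  have h2 := Finset.add_sum_erase (Finset.Icc 1 (2*p)) (fun k => (-1:ℝ)^(k+1) * (k:ℝ)) h1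
  rw [he] at h2
  have h3 := alt_sum1 p
  rw [← h2] at h3
  norm_num at h3
  linarith

lemma alt_sum3' (p : ℕ) (hp : 1 ≤ p) :
    ∑ k ∈ Finset.Icc 2 (2*p), (-1:ℝ)^(k+1) * (k:ℝ)^3 = -(4*(p:ℝ)^3 + 3*(p:ℝ)^2) - 1 := by
  have he : (Finset.Icc 1 (2*p)).erase 1 = Finset.Icc 2 (2*p) := by
    ext x; simp only [Finset.mem_erase, Finset.mem_Icc]; omega
  have h1 : (1:ℕ) ∈ Finset.Icc 1 (2*p) := by simp; omega
  have h2 := Finset.add_sum_erase (Finset.Icc 1 (2*p)) (fun k => (-1:ℝ)^(k+1) * (k:ℝ)^3) h1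
  rw [he] at h2
  have h3 := alt_sum3 p
  rw [← h2] at h3
  norm_num at h3
  linarith

lemma key_bound (a u : ℝ) (ha : |a| ≤ 5/4) (h0 : 0 ≤ u) (h1 : u ≤ 1) :
    a * Real.sin u ≤ a * (u - u^3/6) + u^4 * (25/384) := by
  have hb := Real.sin_bound (x := u) (by rwa [abs_of_nonneg h0])
  rw [abs_of_nonneg h0] at hb
  have h2 : |a * Real.sin u - a * (u - u^3/6)| ≤ (5/4) * (u^4 * (5/96)) := by
    rw [← mul_sub, abs_mul]
    exact mul_le_mul ha (le_trans hb (by nlinarith [mul_le_mul_of_nonneg_left h1 (pow_nonneg h0 4), pow_nonneg h0 4])) (abs_nonneg _) (by norm_num)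
  have := (abs_le.mp h2).2
  linarith

set_option maxHeartbeats 2000000 in
theorem not_nonneg_odd_mid_lambda (n : ℕ) (hn : 3 ≤ n) (hodd : Odd n)
    (lam : ℝ) (hlam1 : (2 * (n : ℝ) - 3) / (4 * n) < lam) (hlam2 : lam ≤ 1 / 2) :
    ∃ x ∈ Set.Icc (0 : ℝ) π,
      (((n : ℝ) + 1) / 2 - n * lam) * Real.sin x +
        ∑ k ∈ Finset.Icc 2 (n - 1), Real.sin (k * x) +
        lam * Real.sin (n * x) < 0 := by
  obtain ⟨p, hp⟩ := hodd
  have hp1 : 1 ≤ p := by omega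
  have hN3 : (3:ℝ) ≤ (n:ℝ) := by exact_mod_cast hn
  have hN0 : (0:ℝ) < (n:ℝ) := by linarith
  have hNp : (n:ℝ) = 2*(p:ℝ)+1 := by rw [hp]; push_cast; ring
  have hP0 : (1:ℝ) ≤ (p:ℝ) := by exact_mod_cast hp1
  have hl4 : 2*(n:ℝ) - 3 < 4*(n:ℝ)*lam := by
    have := (div_lt_iff₀ (by linarith : (0:ℝ) < 4*(n:ℝ))).mp hlam1
    linarith
  have hlam0 : 0 < lam := by nlinarith
  set κ : ℝ := ((n:ℝ)+1)/2 - (n:ℝ)*lam with hκdef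
  set S : ℝ := κ - (4*(p:ℝ)^3 + 3*(p:ℝ)^2) - 1 + lam * (n:ℝ)^3 with hSdef
  have hSpos : 0 < S := by
    rw [hSdef, hκdef, hNp]
    rw [hNp] at hl4
    nlinarith [mul_pos (mul_pos (by linarith : (0:ℝ) < (p:ℝ)) (by linarith : (0:ℝ) < (p:ℝ)+1)) hlam0,
      mul_lt_mul_of_pos_left hl4 (mul_pos (by linarith : (0:ℝ) < (p:ℝ)) (by linarith : (0:ℝ) < (p:ℝ)+1))]
  have hSle : S ≤ (n:ℝ)^4 := by
    have hX : (0:ℝ) ≤ (2*(p:ℝ)+1)^3 - (2*(p:ℝ)+1) := by nlinarith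
    have h5 := mul_le_mul_of_nonneg_right hlam2 hX
    rw [hSdef, hκdef, hNp]; nlinarith
  -- the evaluation point
  set t : ℝ := S / (n:ℝ)^6 with htdef
  have ht0 : 0 < t := div_pos hSpos (by positivity)
  have hnt : (n:ℝ) * t = S / (n:ℝ)^5 := by rw [htdef]; field_simp
  have hnt1 : (n:ℝ) * t ≤ 1 := by
    rw [hnt, div_le_one (by positivity)]
    nlinarith [pow_pos hN0 4]
  have ht1 : t ≤ 1 := by nlinarith
  refine ⟨π - t, ⟨by nlinarith [pi_gt_three], by linarith⟩, ?_⟩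
  -- rewrite each sine
  have hrw : ∀ k : ℕ, Real.sin ((k:ℝ) * (π - t)) = (-1:ℝ)^(k+1) * Real.sin ((k:ℝ)*t) := by
    intro k
    rw [mul_sub, Real.sin_nat_mul_pi_sub, pow_succ]
    ring
  have hsum_rw : ∑ k ∈ Finset.Icc 2 (n-1), Real.sin ((k:ℝ) * (π - t))
      = ∑ k ∈ Finset.Icc 2 (n-1), (-1:ℝ)^(k+1) * Real.sin ((k:ℝ)*t) :=
    Finset.sum_congr rfl (fun k _ => hrw k)
  have hx1 : Real.sin (π - t) = Real.sin t := Real.sin_pi_sub t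
  have hxn : Real.sin ((n:ℝ) * (π - t)) = Real.sin ((n:ℝ)*t) := by
    rw [hrw n, Even.neg_one_pow ⟨p+1, by omega⟩, one_mul]
  rw [hsum_rw, hx1, hxn]
  -- coefficient bounds
  have hκabs : |κ| ≤ 5/4 := by
    rw [abs_le, hκdef]; constructor <;> nlinarith
  have hlamabs : |lam| ≤ 5/4 := by rw [abs_le]; constructor <;> linarith
  -- per-term bounds
  set E : ℝ := ((n:ℝ)*t)^4 * (25/384) with hEdef
  have hb1 : κ * Real.sin t ≤ κ * (t - t^3/6) + E := by
    have := key_bound κ t hκabs ht0.le ht1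
    have h4 : t^4 ≤ ((n:ℝ)*t)^4 := by
      apply pow_le_pow_left₀ ht0.le; nlinarith
    rw [hEdef]; nlinarith
  have hb3 : lam * Real.sin ((n:ℝ)*t) ≤ lam * ((n:ℝ)*t - ((n:ℝ)*t)^3/6) + E := by
    have := key_bound lam ((n:ℝ)*t) hlamabs (by positivity) hnt1
    rw [hEdef]; linarith
  have hb2 : ∀ k ∈ Finset.Icc 2 (n-1),
      (-1:ℝ)^(k+1) * Real.sin ((k:ℝ)*t)
        ≤ (-1:ℝ)^(k+1) * ((k:ℝ)*t - ((k:ℝ)*t)^3/6) + E := by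
    intro k hk
    have hkn : (k:ℝ) ≤ (n:ℝ) := by
      have : k ≤ n := by simp [Finset.mem_Icc] at hk; omega
      exact_mod_cast this
    have hk0 : (0:ℝ) ≤ (k:ℝ) := by positivity
    have hu0 : (0:ℝ) ≤ (k:ℝ)*t := by positivity
    have hukn : (k:ℝ)*t ≤ (n:ℝ)*t := by nlinarith
    have hu1 : (k:ℝ)*t ≤ 1 := le_trans hukn hnt1
    have habs : |(-1:ℝ)^(k+1)| ≤ 5/4 := by
      rw [abs_pow, abs_neg, abs_one, one_pow]; norm_num
    have := key_bound ((-1:ℝ)^(k+1)) ((k:ℝ)*t) habs hu0 hu1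
    have h4 : ((k:ℝ)*t)^4 ≤ ((n:ℝ)*t)^4 := pow_le_pow_left₀ hu0 hukn 4
    rw [hEdef]; nlinarith
  have hsum_le := Finset.sum_le_sum hb2
  rw [Finset.sum_add_distrib, Finset.sum_const, Nat.card_Icc] at hsum_le
  have hcard : ((n - 1 + 1 - 2 : ℕ) : ℝ) = (n:ℝ) - 2 := by
    have : n - 1 + 1 - 2 = n - 2 := by omega
    rw [this, Nat.cast_sub (by omega)]; norm_num
  rw [nsmul_eq_mul, hcard] at hsum_le
  -- evaluate the main sum
  have hmain : ∑ k ∈ Finset.Icc 2 (n-1), (-1:ℝ)^(k+1) * ((k:ℝ)*t - ((k:ℝ)*t)^3/6)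
      = t * (-(p:ℝ) - 1) - t^3/6 * (-(4*(p:ℝ)^3 + 3*(p:ℝ)^2) - 1) := by
    have hsplit : ∀ k ∈ Finset.Icc 2 (n-1),
        (-1:ℝ)^(k+1) * ((k:ℝ)*t - ((k:ℝ)*t)^3/6)
          = t * ((-1:ℝ)^(k+1) * (k:ℝ)) - t^3/6 * ((-1:ℝ)^(k+1) * (k:ℝ)^3) := by
      intro k _; ring
    rw [Finset.sum_congr rfl hsplit, Finset.sum_sub_distrib, ← Finset.mul_sum, ← Finset.mul_sum]
    have hn1 : n - 1 = 2*p := by omega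
    rw [hn1, alt_sum1' p hp1, alt_sum3' p hp1]
  rw [hmain] at hsum_le
  -- combine everything
  have htotal : κ * Real.sin t + ∑ k ∈ Finset.Icc 2 (n-1), (-1:ℝ)^(k+1) * Real.sin ((k:ℝ)*t)
      + lam * Real.sin ((n:ℝ)*t)
      ≤ t * (κ - (p:ℝ) - 1 + lam * (n:ℝ)) - t^3/6 * S + (n:ℝ) * E := by
    have expand : κ * (t - t^3/6) + (t * (-(p:ℝ) - 1) - t^3/6 * (-(4*(p:ℝ)^3 + 3*(p:ℝ)^2) - 1))
        + lam * ((n:ℝ)*t - ((n:ℝ)*t)^3/6)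
        = t * (κ - (p:ℝ) - 1 + lam * (n:ℝ)) - t^3/6 * S := by
      rw [hSdef]; ring
    linarith
  have hzero : κ - (p:ℝ) - 1 + lam * (n:ℝ) = 0 := by
    rw [hκdef, hNp]; ring
  rw [hzero, mul_zero, zero_sub] at htotal
  -- final negativity
  have hfin : -(t^3/6 * S) + (n:ℝ) * E < 0 := by
    have h1 : (n:ℝ) * E = (25/384) * ((n:ℝ)^5 * t) * t^3 := by rw [hEdef]; ring
    have h2 : (n:ℝ)^5 * t = S / (n:ℝ) := by rw [htdef]; field_simp
    have h3 : S / (n:ℝ) ≤ S / 3 := by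
      apply div_le_div_of_nonneg_left hSpos.le (by norm_num) hN3
    have ht3 : 0 < t^3 := by positivity
    rw [h1, h2]
    nlinarith [mul_le_mul_of_nonneg_right h3 ht3.le, mul_pos ht3 hSpos]
  exact lt_of_le_of_lt htotal hfin
end

section
/- Let n ≥ 3 be an odd integer and let λ > 1/2 be a real number. Then the polynomial f_{1,λ,n}(x) = sin(x) + Σ_{k=2}^{n−1} sin(kx) + λ·sin(nx) is NOT nonnegative on [0,π]; that is, there exists x ∈ [0,π] with f_{1,λ,n}(x) < 0. -/
open Real Finset Filter

private lemma aux_sum_mul (w : ℂ) (n : ℕ) :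
    (∑ k ∈ Finset.range n, (k : ℂ) * w ^ k) * (w - 1)
      = ((n : ℂ) - 1) * w ^ n - ∑ k ∈ Finset.range n, w ^ k + 1 := by
  induction n with
  | zero => simp
  | succ m ih =>
    rw [Finset.sum_range_succ, Finset.sum_range_succ (fun k => w ^ k), add_mul, ih]
    push_cast
    ring

theorem not_nonneg_odd_large_lambda (n : ℕ) (hn : 3 ≤ n) (hodd : Odd n)
    (lam : ℝ) (hlam : 1 / 2 < lam) :
    ∃ x ∈ Set.Icc (0 : ℝ) π,
      1 * Real.sin x + ∑ k ∈ Finset.Icc 2 (n - 1), Real.sin (k * x) +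
        lam * Real.sin (n * x) < 0 := by
  have hn0 : (0 : ℝ) < n := by positivity
  have hn3 : (3 : ℝ) ≤ n := by exact_mod_cast hn
  have hπ := Real.pi_pos
  have hπn0 : 0 < π / n := by positivity
  have hπnπ : π / n < π := by
    rw [div_lt_iff₀ hn0]; nlinarith
  set θ : ℝ := π - π / n with hθdef
  have hθ0 : 0 < θ := by rw [hθdef]; linarith
  have hθπ : θ < π := by rw [hθdef]; linarith
  -- n * θ = (n-1) * π, with n - 1 even
  obtain ⟨m, hm⟩ : ∃ m : ℕ, n = 2 * m + 1 := hodd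
  have hnθ : (n : ℝ) * θ = (2 * m) * π := by
    rw [hθdef]
    field_simp
    push_cast [hm]
    ring
  -- the complex root of unity
  set w : ℂ := Complex.exp (θ * Complex.I) with hwdef
  have hwk : ∀ k : ℕ, w ^ k = Complex.exp ((k * θ : ℝ) * Complex.I) := by
    intro k
    rw [hwdef, ← Complex.exp_nat_mul]
    push_cast
    ring_nf
  have hwre : ∀ k : ℕ, (w ^ k).re = Real.cos (k * θ) := by
    intro k; rw [hwk k, Complex.exp_ofReal_mul_I_re]
  have hwim : ∀ k : ℕ, (w ^ k).im = Real.sin (k * θ) := by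
    intro k; rw [hwk k, Complex.exp_ofReal_mul_I_im]
  have hwn : w ^ n = 1 := by
    rw [hwk n]
    have h1 : ((n * θ : ℝ) : ℂ) * Complex.I = (m : ℤ) * (2 * π * Complex.I) := by
      push_cast [hnθ]
      ring
    rw [h1, Complex.exp_int_mul_two_pi_mul_I]
  -- cos θ < 1, hence w ≠ 1
  have hcosθ : Real.cos θ < 1 := by
    rw [hθdef, Real.cos_pi_sub]
    have : 0 < Real.cos (π / n) := by
      apply Real.cos_pos_of_mem_Ioo
      constructor
      · linarith
      · rw [div_lt_div_iff₀ hn0 two_pos]; nlinarith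
    linarith
  have hw1 : w ≠ 1 := by
    intro h
    have h1 := hwre 1
    rw [pow_one, h] at h1
    push_cast at h1
    simp at h1
    linarith
  have hwsub : w - 1 ≠ 0 := sub_ne_zero.mpr hw1
  -- geometric sums
  have hA : ∑ k ∈ Finset.range n, w ^ k = 0 := by
    rw [geom_sum_eq hw1, hwn]; simp
  have hB : ∑ k ∈ Finset.range n, (k : ℂ) * w ^ k = n / (w - 1) := by
    have := aux_sum_mul w n
    rw [hwn, hA] at this
    field_simp at this ⊢
    linear_combination this
  -- real sums over range
  have hsin_sum : ∑ k ∈ Finset.range n, Real.sin (k * θ) = 0 := by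
    have := congrArg Complex.im hA
    rwa [Complex.im_sum, Finset.sum_congr rfl (fun k _ => hwim k)] at this
  have hcos_sum : ∑ k ∈ Finset.range n, (k : ℝ) * Real.cos (k * θ) = -(n / 2) := by
    have h1 := congrArg Complex.re hB
    rw [Complex.re_sum] at h1
    have h2 : ∀ k ∈ Finset.range n, ((k : ℂ) * w ^ k).re = (k : ℝ) * Real.cos (k * θ) := by
      intro k _
      rw [Complex.mul_re]
      simp [hwre k, hwim k]
    rw [Finset.sum_congr rfl h2] at h1
    rw [h1]
    -- Re (n / (w-1)) = -(n/2)
    rw [div_eq_mul_inv, Complex.mul_re, Complex.inv_re, Complex.inv_im]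
    have hre : (w - 1).re = Real.cos θ - 1 := by
      have := hwre 1; rw [pow_one] at this
      simp [Complex.sub_re, this]
    have him : (w - 1).im = Real.sin θ := by
      have := hwim 1; rw [pow_one] at this
      simp [Complex.sub_im, this]
    have hnsq : Complex.normSq (w - 1) = 2 - 2 * Real.cos θ := by
      rw [Complex.normSq_apply, hre, him]
      nlinarith [Real.sin_sq_add_cos_sq θ]
    rw [hre, hnsq]
    simp only [Complex.natCast_re, Complex.natCast_im]
    have h3 : (2 : ℝ) - 2 * Real.cos θ ≠ 0 := by nlinarith
    field_simp
    have h4 : (1:ℝ) - Real.cos θ ≠ 0 := ne_of_gt (by linarith)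
    rw [div_eq_iff h4]
    ring
  -- conversion of Icc sums to range sums
  have hIcc : ∀ g : ℕ → ℝ, ∑ k ∈ Finset.Icc 2 (n-1), g k
      = ∑ k ∈ Finset.range n, g k - (g 0 + g 1) := by
    intro g
    have h : Finset.Icc 2 (n-1) = Finset.Ico 2 n := by
      rw [← Finset.Ico_add_one_right_eq_Icc]
      congr 1
      omega
    rw [h, Finset.sum_Ico_eq_sub g (by omega), Finset.sum_range_succ, Finset.sum_range_one]
  -- trig values at n*θ
  have hsinnθ : Real.sin ((n : ℝ) * θ) = 0 := by
    rw [hnθ]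
    have h : (2 * (m : ℝ)) * π = ((2 * m : ℕ) : ℝ) * π := by push_cast; ring
    rw [h, Real.sin_nat_mul_pi]
  have hcosnθ : Real.cos ((n : ℝ) * θ) = 1 := by
    rw [hnθ]
    have h : (2 * (m : ℝ)) * π = (m : ℝ) * (2 * π) := by ring
    rw [h, Real.cos_nat_mul_two_pi]
  -- the function
  set F : ℝ → ℝ := fun x => Real.sin x + ∑ k ∈ Finset.Icc 2 (n-1), Real.sin (k * x)
      + lam * Real.sin (n * x) with hFdef
  -- F θ = 0
  have hFθ : F θ = 0 := by
    rw [hFdef]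
    simp only
    rw [hIcc (fun k => Real.sin (k * θ)), hsin_sum, hsinnθ]
    norm_num
  -- derivative of F at θ
  have hderiv : ∀ k : ℕ, HasDerivAt (fun x : ℝ => Real.sin (k * x))
      ((k : ℝ) * Real.cos (k * θ)) θ := by
    intro k
    have h1 : HasDerivAt (fun x : ℝ => (k : ℝ) * x) ((k : ℝ) * 1) θ :=
      (hasDerivAt_id θ).const_mul (k : ℝ)
    have h2 := (Real.hasDerivAt_sin ((k : ℝ) * θ)).comp θ h1
    have h3 : Real.cos ((k : ℝ) * θ) * ((k : ℝ) * 1) = (k : ℝ) * Real.cos ((k : ℝ) * θ) := by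
      ring
    exact h3 ▸ h2
  set c : ℝ := Real.cos θ + (∑ k ∈ Finset.Icc 2 (n-1), (k : ℝ) * Real.cos (k * θ))
      + lam * ((n : ℝ) * Real.cos (n * θ)) with hcdef
  have hd : HasDerivAt F c θ := by
    rw [hFdef, hcdef]
    exact ((Real.hasDerivAt_sin θ).add
      (HasDerivAt.fun_sum (fun k _ => hderiv k))).add ((hderiv n).const_mul lam)
  have hc : 0 < c := by
    rw [hcdef, hIcc (fun k => (k : ℝ) * Real.cos ((k : ℝ) * θ)), hcos_sum, hcosnθ]
    push_cast
    norm_num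
    nlinarith
  -- slope argument
  have hslope := hasDerivAt_iff_tendsto_slope.mp hd
  have hev1 : ∀ᶠ x in nhdsWithin θ {θ}ᶜ, 0 < slope F θ x :=
    hslope.eventually (eventually_gt_nhds hc)
  have hle : nhdsWithin θ (Set.Iio θ) ≤ nhdsWithin θ {θ}ᶜ :=
    nhdsWithin_mono θ (fun x hx => ne_of_lt hx)
  have hev2 : ∀ᶠ x in nhdsWithin θ (Set.Iio θ), 0 < slope F θ x := hev1.filter_mono hle
  have hev3 : ∀ᶠ x in nhdsWithin θ (Set.Iio θ), x ∈ Set.Ioo 0 θ :=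
    Filter.eventually_of_mem (Ioo_mem_nhdsLT_of_mem ⟨hθ0, le_refl θ⟩) (fun x hx => hx)
  obtain ⟨x, hx1, hx2⟩ := (hev2.and hev3).exists
  have hxθ : x - θ < 0 := sub_neg.mpr hx2.2
  have hFx : F x < 0 := by
    have h1 : F x = slope F θ x * (x - θ) := by
      rw [slope_def_field, div_mul_cancel₀ _ (ne_of_lt hxθ), hFθ, sub_zero]
    rw [h1]
    exact mul_neg_of_pos_of_neg hx1 hxθ
  refine ⟨x, ⟨le_of_lt hx2.1, le_of_lt (lt_trans hx2.2 hθπ)⟩, ?_⟩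
  rw [one_mul]
  exact hFx
end

section
/- Let n ≥ 4 be an even integer and let λ < 1/2 be a real number. Then the polynomial f_{1,λ,n}(x) = sin(x) + Σ_{k=2}^{n−1} sin(kx) + λ·sin(nx) is NOT nonnegative on [0,π]; that is, there exists x ∈ [0,π] with f_{1,λ,n}(x) < 0. -/
open Real Finset

lemma sum_exp_zero' (n : ℕ) (hn : 2 ≤ n) :
    ∑ k ∈ Finset.range n, Complex.exp (2 * ↑π * Complex.I / n) ^ k = 0 := by
  have hprim := Complex.isPrimitiveRoot_exp n (by omega)
  rw [geom_sum_eq (hprim.ne_one (by omega)) n, hprim.pow_eq_one, sub_self, zero_div]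

lemma sum_cos_range (n : ℕ) (hn : 2 ≤ n) :
    ∑ k ∈ Finset.range n, Real.cos (2 * π * k / n) = 0 ∧
    ∑ k ∈ Finset.range n, Real.sin (2 * π * k / n) = 0 := by
  have h := sum_exp_zero' n hn
  have hk : ∀ k : ℕ, Complex.exp (2 * ↑π * Complex.I / n) ^ k
      = Complex.exp (((2 * π * k / n : ℝ) : ℂ) * Complex.I) := by
    intro k
    rw [← Complex.exp_nat_mul]
    congr 1
    have hn0 : (n : ℂ) ≠ 0 := by exact_mod_cast (by omega : n ≠ 0)
    push_cast
    field_simp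
  rw [Finset.sum_congr rfl (fun k _ => hk k)] at h
  constructor
  · have h2 : ∑ k ∈ Finset.range n, Real.cos (2 * π * k / n)
        = ∑ k ∈ Finset.range n, (Complex.exp (((2 * π * k / n : ℝ) : ℂ) * Complex.I)).re :=
      Finset.sum_congr rfl (fun k _ => (Complex.exp_ofReal_mul_I_re _).symm)
    rw [h2, ← Complex.re_sum, h, Complex.zero_re]
  · have h2 : ∑ k ∈ Finset.range n, Real.sin (2 * π * k / n)
        = ∑ k ∈ Finset.range n, (Complex.exp (((2 * π * k / n : ℝ) : ℂ) * Complex.I)).im :=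
      Finset.sum_congr rfl (fun k _ => (Complex.exp_ofReal_mul_I_im _).symm)
    rw [h2, ← Complex.im_sum, h, Complex.zero_im]

theorem not_nonneg_even_small_lambda (n : ℕ) (hn : 4 ≤ n) (heven : Even n)
    (lam : ℝ) (hlam : lam < 1 / 2) :
    ∃ x ∈ Set.Icc (0 : ℝ) π,
      1 * Real.sin x + ∑ k ∈ Finset.Icc 2 (n - 1), Real.sin (k * x) +
        lam * Real.sin (n * x) < 0 := by
  have hπ : 0 < π := Real.pi_pos
  have hn0 : (0 : ℝ) < n := by exact_mod_cast (by omega : 0 < n)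
  have hnne : (n : ℝ) ≠ 0 := ne_of_gt hn0
  set θ : ℝ := 2 * π / n with hθdef
  have hθ0 : 0 < θ := by positivity
  have hθπ : θ < π := by
    rw [hθdef, div_lt_iff₀ hn0]
    have : (4 : ℝ) ≤ n := by exact_mod_cast hn
    nlinarith
  have hnθ : (n : ℝ) * θ = 2 * π := by
    rw [hθdef]; field_simp
  -- argument rewriting
  have harg : ∀ k : ℕ, 2 * π * k / n = (k : ℝ) * θ := by
    intro k; rw [hθdef]; ring
  have hrange : Finset.range n = insert 0 (Finset.Icc 1 (n - 1)) := by
    ext x; simp only [Finset.mem_range, Finset.mem_insert, Finset.mem_Icc]; omega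
  have hins : Finset.Icc 1 (n - 1) = insert 1 (Finset.Icc 2 (n - 1)) := by
    ext x; simp only [Finset.mem_insert, Finset.mem_Icc]; omega
  obtain ⟨hcos, hsin⟩ := sum_cos_range n (by omega)
  rw [hrange, Finset.sum_insert (by simp)] at hcos hsin
  simp only [harg] at hcos hsin
  simp only [Nat.cast_zero, zero_mul, Real.cos_zero, Real.sin_zero, zero_add] at hcos hsin
  have hcos' : ∑ k ∈ Finset.Icc 1 (n - 1), Real.cos (k * θ) = -1 := by linarith
  -- hcos : ∑ k ∈ Icc 1 (n-1), cos (k*θ) = -1 ; hsin : ∑ sin (k*θ) = 0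
  -- value at θ is 0
  have hFθ : 1 * Real.sin θ + ∑ k ∈ Finset.Icc 2 (n - 1), Real.sin (k * θ) +
      lam * Real.sin (n * θ) = 0 := by
    rw [hnθ, Real.sin_two_pi, mul_zero, add_zero]
    rw [hins, Finset.sum_insert (by simp)] at hsin
    norm_num at hsin ⊢
    linarith
  -- key cosine-weighted sum
  have hC : ∑ k ∈ Finset.Icc 1 (n - 1), (k : ℝ) * Real.cos (k * θ) = -(n : ℝ) / 2 := by
    have hrefl : ∑ k ∈ Finset.Icc 1 (n - 1), (k : ℝ) * Real.cos (k * θ)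
        = ∑ k ∈ Finset.Icc 1 (n - 1), ((n - k : ℕ) : ℝ) * Real.cos ((n - k : ℕ) * θ) := by
      apply Finset.sum_nbij' (fun k => n - k) (fun k => n - k)
      · intro a ha; simp only [Finset.mem_Icc] at ha ⊢; omega
      · intro a ha; simp only [Finset.mem_Icc] at ha ⊢; omega
      · intro a ha; simp only [Finset.mem_Icc] at ha; omega
      · intro a ha; simp only [Finset.mem_Icc] at ha; omega
      · intro a ha; simp only [Finset.mem_Icc] at ha
        have hne : n - (n - a) = a := by omega
        rw [hne]
    have hcoseq : ∀ k ∈ Finset.Icc 1 (n - 1),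
        ((n - k : ℕ) : ℝ) * Real.cos ((n - k : ℕ) * θ) = ((n : ℝ) - k) * Real.cos (k * θ) := by
      intro k hk
      simp only [Finset.mem_Icc] at hk
      have hkn : k ≤ n := by omega
      have hc : ((n - k : ℕ) : ℝ) = (n : ℝ) - k := by
        push_cast [hkn]; ring
      rw [hc]
      congr 1
      have : ((n : ℝ) - k) * θ = 2 * π - k * θ := by
        rw [← hnθ]; ring
      rw [this, Real.cos_sub, Real.cos_two_pi, Real.sin_two_pi]
      ring
    rw [Finset.sum_congr rfl hcoseq] at hrefl
    have hexp : ∑ k ∈ Finset.Icc 1 (n - 1), ((n : ℝ) - k) * Real.cos (k * θ)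
        = (n : ℝ) * ∑ k ∈ Finset.Icc 1 (n - 1), Real.cos (k * θ)
          - ∑ k ∈ Finset.Icc 1 (n - 1), (k : ℝ) * Real.cos (k * θ) := by
      rw [Finset.mul_sum, ← Finset.sum_sub_distrib]
      apply Finset.sum_congr rfl
      intro k _; ring
    rw [hexp, hcos'] at hrefl
    linarith
  -- derivative
  have hder : HasDerivAt (fun x => 1 * Real.sin x + ∑ k ∈ Finset.Icc 2 (n - 1), Real.sin (k * x) +
      lam * Real.sin (n * x)) ((n : ℝ) * (lam - 1 / 2)) θ := by
    have hk : ∀ m : ℕ, HasDerivAt (fun x : ℝ => Real.sin (m * x)) ((m : ℝ) * Real.cos (m * θ)) θ := by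
      intro m
      have h1 : HasDerivAt (fun x : ℝ => (m : ℝ) * x) (m : ℝ) θ := by
        simpa using (hasDerivAt_id θ).const_mul (m : ℝ)
      have h2 := (Real.hasDerivAt_sin ((m : ℝ) * θ)).comp θ h1
      have h3 : HasDerivAt (fun x : ℝ => Real.sin ((m : ℝ) * x)) (Real.cos ((m : ℝ) * θ) * m) θ := by
        simpa [Function.comp_def] using h2
      rw [mul_comm (Real.cos ((m : ℝ) * θ)) (m : ℝ)] at h3
      exact h3
    have hsum : HasDerivAt (fun x => ∑ k ∈ Finset.Icc 2 (n - 1), Real.sin (k * x))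
        (∑ k ∈ Finset.Icc 2 (n - 1), (k : ℝ) * Real.cos (k * θ)) θ :=
      HasDerivAt.fun_sum fun k _ => hk k
    have hlast : HasDerivAt (fun x => lam * Real.sin (n * x)) (lam * ((n : ℝ) * Real.cos (n * θ))) θ :=
      (hk n).const_mul lam
    have h1 : HasDerivAt (fun x : ℝ => 1 * Real.sin x) (1 * Real.cos θ) θ :=
      (Real.hasDerivAt_sin θ).const_mul 1
    have := (h1.add hsum).add hlast
    simp only [Pi.add_def] at this
    refine this.congr_deriv ?_
    rw [hins, Finset.sum_insert (by simp)] at hC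
    rw [hnθ, Real.cos_two_pi]
    simp only [Nat.cast_one, one_mul] at hC
    have h4 : (4:ℝ) ≤ n := by exact_mod_cast hn
    nlinarith [hC]
  -- slope argument
  have hD : (n : ℝ) * (lam - 1 / 2) < 0 :=
    mul_neg_of_pos_of_neg hn0 (by linarith)
  have ht := hasDerivAt_iff_tendsto_slope.mp hder
  have hmono : nhdsWithin θ (Set.Ioi θ) ≤ nhdsWithin θ {θ}ᶜ :=
    nhdsWithin_mono θ (fun x hx => Set.mem_compl_singleton_iff.mpr (ne_of_gt hx))
  have h1 := (ht.mono_left hmono).eventually_lt_const hD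
  have h2 : ∀ᶠ x in nhdsWithin θ (Set.Ioi θ), x ∈ Set.Ioo θ π :=
    Filter.eventually_of_mem (Ioo_mem_nhdsGT_of_mem ⟨le_refl θ, hθπ⟩) (fun x hx => hx)
  obtain ⟨x, hx1, hx2⟩ := (h1.and h2).exists
  refine ⟨x, ⟨le_of_lt (lt_trans hθ0 hx2.1), le_of_lt hx2.2⟩, ?_⟩
  rw [slope_def_field, hFθ, sub_zero] at hx1
  rcases div_neg_iff.mp hx1 with h | h
  · linarith [h.2, hx2.1]
  · exact h.1
end

section
/- Let a, b, c be real numbers. The sine polynomial a·sin(x) + b·sin(2x) + c·sin(3x) is nonnegative for all x ∈ [0,π] if and only if either (i) |b| ≥ 4c and a − 2|b| + 3c ≥ 0, or (ii) |b| < 4c and a ≥ c + b²/(4c). -/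
open Real

theorem degree_three_sine_nonneg_iff (a b c : ℝ) :
    (∀ x ∈ Set.Icc (0 : ℝ) π,
      0 ≤ a * Real.sin x + b * Real.sin (2 * x) + c * Real.sin (3 * x)) ↔
    ((4 * c ≤ |b| ∧ 0 ≤ a - 2 * |b| + 3 * c) ∨
     (|b| < 4 * c ∧ c + b ^ 2 / (4 * c) ≤ a)) := by
  have key : ∀ x : ℝ, a * Real.sin x + b * Real.sin (2 * x) + c * Real.sin (3 * x)
      = Real.sin x * (4 * c * (Real.cos x) ^ 2 + 2 * b * (Real.cos x) + (a - c)) := by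
    intro x
    rw [Real.sin_two_mul, Real.sin_three_mul]
    linear_combination (-4 * c * Real.sin x) * (Real.sin_sq_add_cos_sq x)
  constructor
  · intro h
    have hq : ∀ t ∈ Set.Icc (-1 : ℝ) 1, 0 ≤ 4 * c * t ^ 2 + 2 * b * t + (a - c) := by
      have hsub : Set.Icc (-1 : ℝ) 1 ⊆ {t : ℝ | 0 ≤ 4 * c * t ^ 2 + 2 * b * t + (a - c)} := by
        rw [← closure_Ioo (by norm_num : (-1 : ℝ) ≠ 1)]
        apply closure_minimal _ (isClosed_le continuous_const (by continuity))
        rintro t ⟨ht1, ht2⟩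
        have hx1 : 0 < Real.arccos t := Real.arccos_pos.mpr ht2
        have hx2 : Real.arccos t < π :=
          lt_of_le_of_ne (Real.arccos_le_pi t)
            (fun he => absurd (Real.arccos_eq_pi.mp he) (by linarith))
        have hs : 0 < Real.sin (Real.arccos t) := Real.sin_pos_of_pos_of_lt_pi hx1 hx2
        have h0 := h (Real.arccos t) ⟨le_of_lt hx1, le_of_lt hx2⟩
        rw [key, Real.cos_arccos (le_of_lt ht1) (le_of_lt ht2)] at h0
        show 0 ≤ 4 * c * t ^ 2 + 2 * b * t + (a - c)
        by_contra hneg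
        push_neg at hneg
        nlinarith
      exact fun t ht => hsub ht
    by_cases hbc : |b| < 4 * c
    · right
      refine ⟨hbc, ?_⟩
      have hc : 0 < c := by have := abs_nonneg b; linarith
      have hc4 : 0 < 4 * c := by linarith
      have hblt := abs_lt.mp hbc
      have ht : -b / (4 * c) ∈ Set.Icc (-1 : ℝ) 1 := by
        constructor
        · rw [le_div_iff₀ hc4]; linarith
        · rw [div_le_one hc4]; linarith
      have h0 := hq _ ht
      have key2 : 4 * c * (-b / (4 * c)) ^ 2 + 2 * b * (-b / (4 * c)) + (a - c)
          = a - c - b ^ 2 / (4 * c) := by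
        field_simp
        ring
      rw [key2] at h0
      linarith
    · left
      push_neg at hbc
      refine ⟨hbc, ?_⟩
      have h1 := hq 1 (by norm_num)
      have h2 := hq (-1) (by norm_num)
      rcases abs_cases b with ⟨hb, _⟩ | ⟨hb, _⟩ <;> rw [hb] <;> nlinarith
  · rintro hrhs x ⟨hx1, hx2⟩
    rw [key x]
    have hs : 0 ≤ Real.sin x := Real.sin_nonneg_of_nonneg_of_le_pi hx1 hx2
    apply mul_nonneg hs
    have hc1 : -1 ≤ Real.cos x := Real.neg_one_le_cos x
    have hc2 : Real.cos x ≤ 1 := Real.cos_le_one x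
    set t := Real.cos x with htdef
    rcases hrhs with ⟨hbc, ha⟩ | ⟨hbc, ha⟩
    · rcases abs_cases b with ⟨hb, hb0⟩ | ⟨hb, hb0⟩ <;> rw [hb] at hbc ha <;>
        rcases le_or_gt 0 c with hcs | hcs
      · nlinarith [mul_nonneg (by linarith : (0:ℝ) ≤ 1 + t) (by linarith : (0:ℝ) ≤ b - 4 * c),
          mul_nonneg hcs (sq_nonneg (t + 1))]
      · nlinarith [mul_nonneg hb0 (by linarith : (0:ℝ) ≤ 1 + t),
          mul_nonneg (by linarith : (0:ℝ) ≤ -c)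
            (mul_nonneg (by linarith : (0:ℝ) ≤ 1 - t) (by linarith : (0:ℝ) ≤ 1 + t))]
      · nlinarith [mul_nonneg (by linarith : (0:ℝ) ≤ 1 - t) (by linarith : (0:ℝ) ≤ -b - 4 * c),
          mul_nonneg hcs (sq_nonneg (t - 1))]
      · nlinarith [mul_nonneg (by linarith : (0:ℝ) ≤ -b) (by linarith : (0:ℝ) ≤ 1 - t),
          mul_nonneg (by linarith : (0:ℝ) ≤ -c)
            (mul_nonneg (by linarith : (0:ℝ) ≤ 1 - t) (by linarith : (0:ℝ) ≤ 1 + t))]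
    · have hc : 0 < c := by have := abs_nonneg b; linarith
      have hc4 : 0 < 4 * c := by linarith
      have hb2 : b ^ 2 ≤ (a - c) * (4 * c) := by
        rw [← div_le_iff₀ hc4]
        linarith
      nlinarith [sq_nonneg (4 * c * t + b), hc4]
end

section
/- Let a, b, c be real numbers. If the sine polynomial a·sin(x) + b·sin(2x) + c·sin(3x) is nonnegative for all x ∈ [0,π], then a ≥ |b|. -/
open Real

theorem degree_three_sine_nonneg_necessary (a b c : ℝ)
    (h : ∀ x ∈ Set.Icc (0 : ℝ) π,
      0 ≤ a * Real.sin x + b * Real.sin (2 * x) + c * Real.sin (3 * x)) :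
    |b| ≤ a := by
  have hpi := Real.pi_pos
  have h1 := h (π/3) ⟨by linarith, by linarith⟩
  have h2 := h (2*π/3) ⟨by linarith, by linarith⟩
  have s1 : Real.sin (π/3) = Real.sqrt 3 / 2 := Real.sin_pi_div_three
  have e2 : (2:ℝ) * (π/3) = π - π/3 := by ring
  have s2 : Real.sin (2*(π/3)) = Real.sqrt 3 / 2 := by rw [e2, Real.sin_pi_sub, s1]
  have s3 : Real.sin (3*(π/3)) = 0 := by
    have : (3:ℝ) * (π/3) = π := by ring
    rw [this, Real.sin_pi]
  have t1 : Real.sin (2*π/3) = Real.sqrt 3 / 2 := by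
    have : (2:ℝ)*π/3 = 2*(π/3) := by ring
    rw [this, s2]
  have t2 : Real.sin (2*(2*π/3)) = -(Real.sqrt 3 / 2) := by
    have : (2:ℝ)*(2*π/3) = π + π/3 := by ring
    rw [this, Real.sin_add, Real.sin_pi, Real.cos_pi, s1]; ring
  have t3 : Real.sin (3*(2*π/3)) = 0 := by
    have : (3:ℝ)*(2*π/3) = 2*π := by ring
    rw [this, Real.sin_two_pi]
  rw [s1, s2, s3] at h1
  rw [t1, t2, t3] at h2
  have hs : 0 < Real.sqrt 3 := Real.sqrt_pos.mpr (by norm_num)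
  have hab : 0 ≤ a + b := by nlinarith
  have hab' : 0 ≤ a - b := by nlinarith
  rw [abs_le]; constructor <;> linarith
end

section
/- Let a, b, c be real numbers. If the cosine polynomial a + b·cos(2x) + c·cos(3x) is nonnegative for all x ∈ [0,π], then 2a ≥ |b| + c. -/
open Real

theorem degree_three_cosine_nonneg_necessary (a b c : ℝ)
    (h : ∀ x ∈ Set.Icc (0 : ℝ) π,
      0 ≤ a + b * Real.cos (2 * x) + c * Real.cos (3 * x)) :
    |b| + c ≤ 2 * a := by
  have hπ := Real.pi_pos
  have h1 := h (π/6) ⟨by linarith, by linarith⟩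
  have h2 := h (π/3) ⟨by linarith, by linarith⟩
  have h3 := h (π/2) ⟨by linarith, by linarith⟩
  have h4 := h (π/4) ⟨by linarith, by linarith⟩
  have h5 := h (3*π/4) ⟨by linarith, by linarith⟩
  have h6 := h π ⟨le_of_lt hπ, le_refl _⟩
  rw [show 2*(π/6) = π/3 by ring, Real.cos_pi_div_three,
      show 3*(π/6) = π/2 by ring, Real.cos_pi_div_two] at h1
  rw [show 2*(π/3) = π - π/3 by ring, Real.cos_pi_sub, Real.cos_pi_div_three,
      show 3*(π/3) = π by ring, Real.cos_pi] at h2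
  rw [show 2*(π/2) = π by ring, Real.cos_pi,
      show 3*(π/2) = π/2 + π by ring, Real.cos_add_pi, Real.cos_pi_div_two, neg_zero] at h3
  rw [show 2*(π/4) = π/2 by ring, Real.cos_pi_div_two,
      show 3*(π/4) = π - π/4 by ring, Real.cos_pi_sub, Real.cos_pi_div_four] at h4
  rw [show 2*(3*π/4) = π/2 + π by ring, Real.cos_add_pi, Real.cos_pi_div_two, neg_zero,
      show 3*(3*π/4) = π/4 + 2*π by ring, Real.cos_add_two_pi, Real.cos_pi_div_four] at h5
  rw [show 2*π = 2*π by ring, Real.cos_two_pi,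
      show 3*π = π + 2*π by ring, Real.cos_add_two_pi, Real.cos_pi] at h6
  rcases abs_cases b with ⟨hb, _⟩ | ⟨hb, _⟩ <;> rw [hb] <;> linarith
end

section
/- Let λ > 1/4 and κ be real numbers. The sine polynomial κ·sin(x) + sin(2x) + λ·sin(3x) is nonnegative for all x ∈ [0,π] if and only if κ ≥ λ + 1/(4λ). -/
open Real

theorem curvilinear_boundary_P3 (lam κ : ℝ) (hlam : 1 / 4 < lam) :
    (∀ x ∈ Set.Icc (0 : ℝ) π,
      0 ≤ κ * Real.sin x + Real.sin (2 * x) + lam * Real.sin (3 * x)) ↔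
    lam + 1 / (4 * lam) ≤ κ := by
  have hl : (0:ℝ) < lam := by linarith
  constructor
  · intro h
    set c : ℝ := -1/(4*lam) with hc
    have hc1 : (-1:ℝ) < c := by
      rw [hc]
      rw [neg_lt, neg_div, neg_neg, div_lt_one (by linarith)]
      linarith
    have hc2 : c ≤ 1 := by
      rw [hc]
      have : 0 < 1/(4*lam) := by positivity
      rw [neg_div]
      linarith
    set x := Real.arccos c with hx
    have hx1 : x ∈ Set.Icc 0 π := ⟨Real.arccos_nonneg _, Real.arccos_le_pi _⟩
    have hcos : Real.cos x = c := Real.cos_arccos (le_of_lt hc1) hc2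
    have hc0 : c < 0 := by
      rw [hc, neg_div]
      have : 0 < 1/(4*lam) := by positivity
      linarith
    have hsin : Real.sin x = Real.sqrt (1 - c^2) := by
      rw [hx]; exact Real.sin_arccos c
    have hspos : 0 < Real.sin x := by
      rw [hsin]
      apply Real.sqrt_pos.2
      nlinarith
    have hs2 : Real.sin x ^ 2 = 1 - c^2 := by
      rw [hsin, Real.sq_sqrt (by nlinarith)]
    have key := h x hx1
    rw [Real.sin_two_mul, Real.sin_three_mul, hcos] at key
    have hs3 : Real.sin x ^ 3 = Real.sin x * (1 - c^2) := by
      rw [← hs2]; ring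
    have hfac : κ * Real.sin x + 2 * Real.sin x * c + lam * (3 * Real.sin x - 4 * Real.sin x ^ 3)
        = Real.sin x * (κ + 2*c + lam*(4*c^2 - 1)) := by
      rw [hs3]; ring
    rw [hfac] at key
    rw [mul_comm] at key
    have hinner : 0 ≤ κ + 2*c + lam*(4*c^2 - 1) :=
      nonneg_of_mul_nonneg_left key hspos
    have heq : κ + 2*c + lam*(4*c^2 - 1) = κ - lam - 1/(4*lam) := by
      rw [hc]; field_simp; ring
    rw [heq] at hinner
    linarith
  · intro hk x hx
    have hs : 0 ≤ Real.sin x := Real.sin_nonneg_of_nonneg_of_le_pi hx.1 hx.2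
    rw [Real.sin_two_mul, Real.sin_three_mul]
    have hcs : Real.sin x ^ 2 = 1 - Real.cos x ^ 2 := by
      have := Real.sin_sq_add_cos_sq x
      linarith
    have hquad : 0 ≤ 4*lam*(Real.cos x + 1/(4*lam))^2 := by positivity
    have hq : 0 ≤ κ + 2 * Real.cos x + lam * (4 * Real.cos x ^ 2 - 1) := by
      have h4 : (4:ℝ)*lam ≠ 0 := by positivity
      have hexp : 4*lam*(Real.cos x + 1/(4*lam))^2
          = 4*lam*Real.cos x^2 + 2*Real.cos x + 1/(4*lam) := by
        field_simp; ring
      rw [hexp] at hquad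
      linarith
    have hfac : κ * Real.sin x + 2 * Real.sin x * Real.cos x
        + lam * (3 * Real.sin x - 4 * Real.sin x ^ 3)
        = Real.sin x * (κ + 2 * Real.cos x + lam * (4 * Real.cos x ^ 2 - 1)) := by
      linear_combination (-4 * lam * Real.sin x) * (Real.sin_sq_add_cos_sq x)
    rw [hfac]
    exact mul_nonneg hs hq
end
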